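/- arXiv:2406.02089 — 7 statements merged into one kernel-verified Lean document; each statement's English description precedes it below -/
import Mathlib

section
/- Let λ, K₁, K₂ > 0 and set ρ := λ/(2K₁K₂). Let k ≥ 0 and let g : [0,k] → ℝ be continuous and nonnegative, satisfying g(t) ≤ ρ e^{−λ(k−t)} + K₁K₂ ∫ₜᵏ e^{−λ(s−t)} g(s)² ds for all t ∈ [0,k]. Then g(t) ≤ (λ/(K₁K₂)) e^{−λ(k−t)} for all t ∈ [0,k]. -/
open Set

noncomputable def Bfun (lam K k δ : ℝ) (s : ℝ) : ℝ :=
  lam / K * Real.exp (-lam * (k - s)) / (δ + Real.exp (-lam * (k - s)))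

lemma riccati_aux (lam K : ℝ) (hlam : 0 < lam) (hK : 0 < K)
    (k : ℝ) (hk : 0 ≤ k) (g : ℝ → ℝ)
    (hcont : ContinuousOn g (Set.Icc 0 k))
    (hnonneg : ∀ t ∈ Set.Icc (0:ℝ) k, 0 ≤ g t)
    (hineq : ∀ t ∈ Set.Icc (0:ℝ) k,
      g t ≤ (lam / (2 * K)) * Real.exp (-lam * (k - t))
        + K * ∫ s in t..k, Real.exp (-lam * (s - t)) * (g s) ^ 2)
    (δ : ℝ) (hδ0 : 0 < δ) (hδ1 : δ < 1) :
    ∀ t ∈ Set.Icc (0:ℝ) k, g t ≤ Bfun lam K k δ t := by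
  have hEpos : ∀ s : ℝ, 0 < Real.exp (-lam * (k - s)) := fun s => Real.exp_pos _
  have hden : ∀ s : ℝ, 0 < δ + Real.exp (-lam * (k - s)) := fun s => by positivity
  have hEcont : Continuous (fun s : ℝ => Real.exp (-lam * (k - s))) := by fun_prop
  have hBcont : Continuous (Bfun lam K k δ) := by
    unfold Bfun
    exact (continuous_const.mul hEcont).div (continuous_const.add hEcont)
      (fun s => (hden s).ne')
  have hEderiv : ∀ s : ℝ, HasDerivAt (fun x : ℝ => Real.exp (-lam * (k - x)))
      (lam * Real.exp (-lam * (k - s))) s := by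
    intro s
    have h1 : HasDerivAt (fun x : ℝ => -lam * (k - x)) lam s := by
      simpa using ((hasDerivAt_id s).const_sub k).const_mul (-lam)
    simpa [mul_comm] using h1.exp
  -- key self-improvement estimate
  have key : ∀ t ∈ Set.Icc (0:ℝ) k, (∀ s ∈ Set.Icc t k, g s ≤ Bfun lam K k δ s) →
      g t ≤ Bfun lam K k δ t
        - lam / (2 * K) * ((1 - δ) / (1 + δ)) * Real.exp (-lam * (k - t)) := by
    intro t ht hBle
    have htk : t ≤ k := ht.2
    have hsub : Set.Icc t k ⊆ Set.Icc (0:ℝ) k := Set.Icc_subset_Icc ht.1 le_rfl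
    have hexpc : Continuous (fun s : ℝ => Real.exp (-lam * (s - t))) := by fun_prop
    have hint1 : IntervalIntegrable (fun s => Real.exp (-lam * (s - t)) * g s ^ 2)
        MeasureTheory.volume t k := by
      apply ContinuousOn.intervalIntegrable
      rw [Set.uIcc_of_le htk]
      exact hexpc.continuousOn.mul ((hcont.mono hsub).pow 2)
    have hint2 : IntervalIntegrable (fun s => Real.exp (-lam * (s - t)) * Bfun lam K k δ s ^ 2)
        MeasureTheory.volume t k :=
      (hexpc.mul (hBcont.pow 2)).intervalIntegrable t k
    have hmono : (∫ s in t..k, Real.exp (-lam * (s - t)) * g s ^ 2)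
        ≤ ∫ s in t..k, Real.exp (-lam * (s - t)) * Bfun lam K k δ s ^ 2 := by
      apply intervalIntegral.integral_mono_on htk hint1 hint2
      intro s hs
      have h1 := hBle s hs
      have h2 := hnonneg s (hsub hs)
      have h3 : g s ^ 2 ≤ Bfun lam K k δ s ^ 2 := by nlinarith
      exact mul_le_mul_of_nonneg_left h3 (Real.exp_pos _).le
    set u := Real.exp (-lam * (k - t)) with hu
    set c : ℝ := (lam / K) ^ 2 * u / lam with hc
    have hFderiv : ∀ s ∈ Set.uIcc t k,
        HasDerivAt (fun x => -c * (δ + Real.exp (-lam * (k - x)))⁻¹)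
          (Real.exp (-lam * (s - t)) * Bfun lam K k δ s ^ 2) s := by
      intro s hs
      have h1 : HasDerivAt (fun x : ℝ => δ + Real.exp (-lam * (k - x)))
          (lam * Real.exp (-lam * (k - s))) s := (hEderiv s).const_add δ
      have h2 := (h1.inv (hden s).ne').const_mul (-c)
      refine h2.congr_deriv ?_
      have hkey : Real.exp (-lam * (s - t)) = u / Real.exp (-lam * (k - s)) := by
        rw [hu, eq_div_iff (hEpos s).ne', ← Real.exp_add]
        congr 1; ring
      rw [hkey, hc]
      unfold Bfun
      field_simp
    have hcalc : (∫ s in t..k, Real.exp (-lam * (s - t)) * Bfun lam K k δ s ^ 2)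
        = (lam / K) ^ 2 * u / lam * ((δ + u)⁻¹ - (δ + 1)⁻¹) := by
      rw [intervalIntegral.integral_eq_sub_of_hasDerivAt hFderiv hint2]
      have hEk : Real.exp (-lam * (k - k)) = 1 := by simp
      rw [hEk, hc]
      ring
    have h0 := hineq t ht
    rw [← hu] at h0
    have halg : lam / (2 * K) * u + K * ((lam / K) ^ 2 * u / lam * ((δ + u)⁻¹ - (δ + 1)⁻¹))
        = Bfun lam K k δ t - lam / (2 * K) * ((1 - δ) / (1 + δ)) * u := by
      unfold Bfun
      rw [← hu]
      have h1 : (0:ℝ) < δ + u := by have := hEpos t; rw [← hu] at this; positivity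
      have h2 : (0:ℝ) < δ + 1 := by linarith
      field_simp
      ring
    calc g t ≤ lam / (2 * K) * u + K * ∫ s in t..k, Real.exp (-lam * (s - t)) * g s ^ 2 := h0
      _ ≤ lam / (2 * K) * u + K * ∫ s in t..k, Real.exp (-lam * (s - t)) * Bfun lam K k δ s ^ 2 := by
          have := mul_le_mul_of_nonneg_left hmono hK.le
          linarith
      _ = Bfun lam K k δ t - lam / (2 * K) * ((1 - δ) / (1 + δ)) * u := by rw [hcalc]; exact halg
  -- the set of good starting times
  set T : Set ℝ := {t | t ∈ Set.Icc (0:ℝ) k ∧ ∀ s ∈ Set.Icc t k, g s ≤ Bfun lam K k δ s}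
    with hT
  have hkT : k ∈ T := by
    constructor
    · exact ⟨hk, le_rfl⟩
    · intro s hs
      have hsk : s = k := le_antisymm hs.2 hs.1
      subst hsk
      have h0 := hineq s ⟨hk, le_rfl⟩
      rw [intervalIntegral.integral_same] at h0
      simp only [sub_self, mul_zero, Real.exp_zero, mul_one] at h0
      unfold Bfun
      simp only [sub_self, mul_zero, neg_zero, Real.exp_zero, mul_one]
      rw [div_div, le_div_iff₀ (by positivity : (0:ℝ) < K * (δ + 1))]
      have hg0 := hnonneg s ⟨hk, le_rfl⟩
      rw [add_zero, le_div_iff₀ (by positivity : (0:ℝ) < 2 * K)] at h0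
      nlinarith
  have hTne : T.Nonempty := ⟨k, hkT⟩
  have hbdd : BddBelow T := ⟨0, fun x hx => hx.1.1⟩
  set t₀ := sInf T with ht₀
  have h0t₀ : 0 ≤ t₀ := le_csInf hTne (fun x hx => hx.1.1)
  have ht₀k : t₀ ≤ k := csInf_le hbdd hkT
  have hIoc : ∀ s ∈ Set.Ioc t₀ k, g s ≤ Bfun lam K k δ s := by
    intro s hs
    obtain ⟨a, haT, has⟩ := exists_lt_of_csInf_lt hTne hs.1
    exact haT.2 s ⟨has.le, hs.2⟩
  have ht₀mem : g t₀ ≤ Bfun lam K k δ t₀ := by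
    rcases eq_or_lt_of_le ht₀k with heq | hlt
    · rw [heq]; exact hkT.2 k ⟨le_rfl, le_rfl⟩
    · haveI : (nhdsWithin t₀ (Set.Ioc t₀ k)).NeBot := by
        apply mem_closure_iff_nhdsWithin_neBot.1
        rw [closure_Ioc (ne_of_lt hlt)]
        exact ⟨le_rfl, hlt.le⟩
      have hcw : ContinuousWithinAt (fun s => g s - Bfun lam K k δ s) (Set.Ioc t₀ k) t₀ := by
        apply ContinuousWithinAt.mono _ (Set.Ioc_subset_Icc_self.trans (Set.Icc_subset_Icc h0t₀ le_rfl))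
        exact ((hcont.sub hBcont.continuousOn).continuousWithinAt ⟨h0t₀, ht₀k⟩)
      have hle : ∀ᶠ s in nhdsWithin t₀ (Set.Ioc t₀ k), g s - Bfun lam K k δ s ≤ 0 :=
        eventually_nhdsWithin_of_forall (fun s hs => sub_nonpos.2 (hIoc s hs))
      have := le_of_tendsto hcw hle
      exact sub_nonpos.1 this
  have ht₀T : t₀ ∈ T := by
    refine ⟨⟨h0t₀, ht₀k⟩, fun s hs => ?_⟩
    rcases eq_or_lt_of_le hs.1 with heq | hlt
    · rw [← heq]; exact ht₀mem
    · exact hIoc s ⟨hlt, hs.2⟩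
  have ht₀0 : t₀ = 0 := by
    by_contra hne
    have ht₀pos : 0 < t₀ := lt_of_le_of_ne h0t₀ (Ne.symm hne)
    have hkey := key t₀ ⟨h0t₀, ht₀k⟩ ht₀T.2
    have hm : 0 < lam / (2 * K) * ((1 - δ) / (1 + δ)) * Real.exp (-lam * (k - t₀)) := by
      have : (0:ℝ) < (1 - δ) / (1 + δ) := div_pos (by linarith) (by linarith)
      positivity
    have hlt0 : g t₀ - Bfun lam K k δ t₀ < 0 := by linarith
    have hcw : ContinuousWithinAt (fun s => g s - Bfun lam K k δ s) (Set.Icc 0 k) t₀ :=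
      (hcont.sub hBcont.continuousOn).continuousWithinAt ⟨h0t₀, ht₀k⟩
    have hnhds : {s | g s - Bfun lam K k δ s < 0} ∈ nhdsWithin t₀ (Set.Icc 0 k) :=
      hcw (Iio_mem_nhds hlt0)
    rw [Metric.mem_nhdsWithin_iff] at hnhds
    obtain ⟨ε, hε, hball⟩ := hnhds
    set t := max 0 (t₀ - ε / 2) with htdef
    have htlt : t < t₀ := max_lt ht₀pos (by linarith)
    have htmem : t ∈ Set.Icc (0:ℝ) k := ⟨le_max_left _ _, le_trans htlt.le ht₀k⟩
    have htT : t ∈ T := by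
      refine ⟨htmem, fun s hs => ?_⟩
      rcases le_or_gt t₀ s with h | h
      · exact ht₀T.2 s ⟨h, hs.2⟩
      · have hsmem : s ∈ Set.Icc (0:ℝ) k := ⟨le_trans htmem.1 hs.1, hs.2⟩
        have hsball : s ∈ Metric.ball t₀ ε := by
          rw [Metric.mem_ball, Real.dist_eq, abs_sub_lt_iff]
          constructor
          · linarith
          · have : t₀ - ε / 2 ≤ t := le_max_right _ _
            have := hs.1
            linarith
        have := hball ⟨hsball, hsmem⟩
        simp only [Set.mem_setOf_eq] at this
        linarith
    have := csInf_le hbdd htT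
    rw [← ht₀] at this
    linarith
  intro s hs
  exact ht₀T.2 s (by rw [ht₀0] at *; exact hs)

/-- Key a priori integral estimate from the proof of Theorem 4.6:
if `g ≥ 0` is continuous on `[0,k]` and
`g t ≤ ρ e^{-λ(k-t)} + K₁K₂ ∫ₜᵏ e^{-λ(s-t)} g(s)² ds` with `ρ = λ/(2K₁K₂)`,
then `g t ≤ (λ/(K₁K₂)) e^{-λ(k-t)}`. -/
theorem riccati_decay_estimate
    (lam K₁ K₂ : ℝ) (hlam : 0 < lam) (hK₁ : 0 < K₁) (hK₂ : 0 < K₂)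
    (k : ℝ) (hk : 0 ≤ k) (g : ℝ → ℝ)
    (hcont : ContinuousOn g (Set.Icc 0 k))
    (hnonneg : ∀ t ∈ Set.Icc (0:ℝ) k, 0 ≤ g t)
    (hineq : ∀ t ∈ Set.Icc (0:ℝ) k,
      g t ≤ (lam / (2 * K₁ * K₂)) * Real.exp (-lam * (k - t))
        + K₁ * K₂ * ∫ s in t..k, Real.exp (-lam * (s - t)) * (g s) ^ 2) :
    ∀ t ∈ Set.Icc (0:ℝ) k, g t ≤ (lam / (K₁ * K₂)) * Real.exp (-lam * (k - t)) := by
  intro t ht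
  set u := Real.exp (-lam * (k - t)) with hu
  have hupos : 0 < u := Real.exp_pos _
  set δ : ℝ := max (1 - u) (1/2) with hδ
  have hδ0 : 0 < δ := lt_of_lt_of_le one_half_pos (le_max_right _ _)
  have hδ1 : δ < 1 := max_lt (by linarith) (by norm_num)
  have hmain := riccati_aux lam (K₁ * K₂) hlam (mul_pos hK₁ hK₂) k hk g hcont hnonneg
    (fun s hs => by rw [← mul_assoc]; exact hineq s hs) δ hδ0 hδ1 t ht
  unfold Bfun at hmain
  rw [← hu] at hmain
  have hge : 1 ≤ δ + u := by
    have := le_max_left (1 - u) (1/2 : ℝ)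
    have : 1 - u ≤ δ := le_max_left _ _
    linarith
  exact le_trans hmain (div_le_self (by positivity) hge)
end

section
/- For all positive integers p, q and all δ, ρ > 0 there exists K > 0 with the following property: for every symmetric M₁₁ ∈ ℝ^{p×p} with M₁₁ ⪰ δI, every symmetric M₂₂ ∈ ℝ^{q×q} with M₂₂ ⪯ −δI, and every M₁₂ ∈ ℝ^{p×q} with ‖M₁₂‖_F ≤ ρ, the block matrix M = [[M₁₁, M₁₂],[M₁₂ᵀ, M₂₂]] is invertible and ‖M⁻¹‖_F ≤ K. -/
open Matrix

/-- The Frobenius norm of a real matrix. -/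
noncomputable def frobeniusNorm {α β : Type*} [Fintype α] [Fintype β]
    (M : Matrix α β ℝ) : ℝ :=
  Real.sqrt (∑ i, ∑ j, (M i j) ^ 2)

/-- Corollary 4.4 (matrix content): a uniform bound on the inverse of the block
matrix `[[M₁₁, M₁₂],[M₁₂ᵀ, M₂₂]]`, depending only on `p, q, δ, ρ`, valid whenever
`M₁₁ ⪰ δ I`, `M₂₂ ⪯ -δ I` are symmetric and `‖M₁₂‖_F ≤ ρ`. -/
theorem uniform_block_inverse_bound
    (p q : ℕ) (hp : 0 < p) (hq : 0 < q) (δ ρ : ℝ) (hδ : 0 < δ) (hρ : 0 < ρ) :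
    ∃ K : ℝ, 0 < K ∧
      ∀ (M₁₁ : Matrix (Fin p) (Fin p) ℝ) (M₂₂ : Matrix (Fin q) (Fin q) ℝ)
        (M₁₂ : Matrix (Fin p) (Fin q) ℝ),
        M₁₁.IsSymm → M₂₂.IsSymm →
        (M₁₁ - δ • (1 : Matrix (Fin p) (Fin p) ℝ)).PosSemidef →
        (-(δ • (1 : Matrix (Fin q) (Fin q) ℝ)) - M₂₂).PosSemidef →
        frobeniusNorm M₁₂ ≤ ρ →
        IsUnit (Matrix.fromBlocks M₁₁ M₁₂ M₁₂ᵀ M₂₂) ∧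
          frobeniusNorm (Matrix.fromBlocks M₁₁ M₁₂ M₁₂ᵀ M₂₂)⁻¹ ≤ K := by
  refine ⟨Real.sqrt ((p + q) / δ ^ 2) + 1, by positivity, ?_⟩
  intro M₁₁ M₂₂ M₁₂ _ _ h11 h22 _
  set N : Matrix (Fin p ⊕ Fin q) (Fin p ⊕ Fin q) ℝ := fromBlocks M₁₁ M₁₂ M₁₂ᵀ M₂₂ with hN
  have hb1 : ∀ u : Fin p → ℝ, δ * (u ⬝ᵥ u) ≤ u ⬝ᵥ (M₁₁ *ᵥ u) := by
    intro u
    have := h11.dotProduct_mulVec_nonneg u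
    simp only [star_trivial, sub_mulVec, dotProduct_sub, smul_mulVec, one_mulVec,
      dotProduct_smul, smul_eq_mul] at this
    linarith
  have hb2 : ∀ v : Fin q → ℝ, v ⬝ᵥ (M₂₂ *ᵥ v) ≤ -(δ * (v ⬝ᵥ v)) := by
    intro v
    have := h22.dotProduct_mulVec_nonneg v
    simp only [star_trivial, sub_mulVec, neg_mulVec, dotProduct_sub, dotProduct_neg,
      smul_mulVec, one_mulVec, dotProduct_smul, smul_eq_mul] at this
    linarith
  have key : ∀ x : Fin p ⊕ Fin q → ℝ,
      δ * (x ⬝ᵥ x) ≤ Sum.elim (x ∘ Sum.inl) (-(x ∘ Sum.inr)) ⬝ᵥ (N *ᵥ x) := by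
    intro x
    have hx : x = Sum.elim (x ∘ Sum.inl) (x ∘ Sum.inr) := by
      funext i; cases i <;> rfl
    set u := x ∘ Sum.inl
    set v := x ∘ Sum.inr
    have hcross : u ⬝ᵥ (M₁₂ *ᵥ v) = v ⬝ᵥ (M₁₂ᵀ *ᵥ u) := by
      simp only [dotProduct, mulVec, dotProduct, transpose_apply, Finset.mul_sum]
      rw [Finset.sum_comm]
      exact Finset.sum_congr rfl fun j _ => Finset.sum_congr rfl fun i _ => by ring
    calc δ * (x ⬝ᵥ x) = δ * (u ⬝ᵥ u) + δ * (v ⬝ᵥ v) := by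
            rw [hx, sumElim_dotProduct_sumElim]; ring
      _ ≤ u ⬝ᵥ (M₁₁ *ᵥ u) + -(v ⬝ᵥ (M₂₂ *ᵥ v)) := by
            have := hb1 u; have := hb2 v; linarith
      _ = Sum.elim u (-v) ⬝ᵥ (N *ᵥ x) := by
            conv_rhs => rw [hx]
            rw [hN, fromBlocks_mulVec]
            simp only [Sum.elim_comp_inl, Sum.elim_comp_inr]
            rw [sumElim_dotProduct_sumElim,
              dotProduct_add, dotProduct_add, neg_dotProduct, neg_dotProduct, hcross]
            ring
  have hdnn : ∀ {n : Type} [Fintype n] (x : n → ℝ), 0 ≤ x ⬝ᵥ x := fun x =>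
    Finset.sum_nonneg fun i _ => mul_self_nonneg _
  have hker : ∀ x : Fin p ⊕ Fin q → ℝ, N *ᵥ x = 0 → x = 0 := by
    intro x hx
    have h1 := key x
    rw [hx, dotProduct_zero] at h1
    have h2 := hdnn x
    have : x ⬝ᵥ x = 0 := by nlinarith
    exact dotProduct_self_eq_zero.mp this
  have hUnit : IsUnit N := by
    rw [← mulVec_injective_iff_isUnit]
    intro x y hxy
    have : N *ᵥ (x - y) = 0 := by rw [mulVec_sub, hxy, sub_self]
    have := hker _ this
    exact sub_eq_zero.mp this
  refine ⟨hUnit, ?_⟩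
  have hdet : IsUnit N.det := (isUnit_iff_isUnit_det N).mp hUnit
  have hNinv : N * N⁻¹ = 1 := mul_nonsing_inv N hdet
  -- column bound
  have hcol : ∀ j : Fin p ⊕ Fin q, (fun i => N⁻¹ i j) ⬝ᵥ (fun i => N⁻¹ i j) ≤ 1 / δ ^ 2 := by
    intro j
    set c : (Fin p ⊕ Fin q) → ℝ := fun i => N⁻¹ i j with hc
    have hcv : c = N⁻¹ *ᵥ Pi.single j 1 := by
      funext i; simp [hc, mulVec_single]
    have hNc : N *ᵥ c = Pi.single j 1 := by
      rw [hcv, mulVec_mulVec, hNinv, one_mulVec]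
    have h1 := key c
    rw [hNc, dotProduct_single, mul_one] at h1
    set s := c ⬝ᵥ c with hs
    have hsnn : 0 ≤ s := hdnn c
    -- the entry is bounded by sqrt s
    have hentry : Sum.elim (c ∘ Sum.inl) (-(c ∘ Sum.inr)) j ≤ Real.sqrt s := by
      have hsq : (Sum.elim (c ∘ Sum.inl) (-(c ∘ Sum.inr)) j) ^ 2 = (c j) ^ 2 := by
        cases j <;> simp [neg_pow]
      have hle : (c j) ^ 2 ≤ s := by
        rw [hs, dotProduct]
        have : (c j) ^ 2 = c j * c j := sq (c j)
        rw [this]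
        exact Finset.single_le_sum (fun i _ => mul_self_nonneg (c i)) (Finset.mem_univ j)
      calc Sum.elim (c ∘ Sum.inl) (-(c ∘ Sum.inr)) j
          ≤ |Sum.elim (c ∘ Sum.inl) (-(c ∘ Sum.inr)) j| := le_abs_self _
        _ = Real.sqrt ((Sum.elim (c ∘ Sum.inl) (-(c ∘ Sum.inr)) j) ^ 2) :=
            (Real.sqrt_sq_eq_abs _).symm
        _ ≤ Real.sqrt s := by rw [hsq]; exact Real.sqrt_le_sqrt hle
    have hds : δ * s ≤ Real.sqrt s := le_trans h1 hentry
    have hsq2 : Real.sqrt s ^ 2 = s := Real.sq_sqrt hsnn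
    have hsqnn : 0 ≤ Real.sqrt s := Real.sqrt_nonneg s
    rcases eq_or_lt_of_le hsnn with h0 | h0
    · rw [← h0]; positivity
    · have hsp : 0 < Real.sqrt s := Real.sqrt_pos.mpr h0
      have h4 : δ * Real.sqrt s ≤ 1 := by nlinarith [hds, hsq2, hsp]
      rw [le_div_iff₀ (by positivity : (0:ℝ) < δ ^ 2)]
      nlinarith [h4, hsqnn, hsq2, hδ.le]
  -- sum the column bounds
  have hsum : ∑ i, ∑ j, (N⁻¹ i j) ^ 2 ≤ (p + q) / δ ^ 2 := by
    rw [Finset.sum_comm]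
    calc ∑ j, ∑ i, (N⁻¹ i j) ^ 2 = ∑ j : Fin p ⊕ Fin q, (fun i => N⁻¹ i j) ⬝ᵥ (fun i => N⁻¹ i j) := by
          refine Finset.sum_congr rfl fun j _ => ?_
          rw [dotProduct]
          exact Finset.sum_congr rfl fun i _ => sq (N⁻¹ i j)
      _ ≤ ∑ _j : Fin p ⊕ Fin q, 1 / δ ^ 2 := Finset.sum_le_sum fun j _ => hcol j
      _ = (p + q) / δ ^ 2 := by
          rw [Finset.sum_const, Finset.card_univ, Fintype.card_sum, Fintype.card_fin,
            Fintype.card_fin, nsmul_eq_mul]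
          push_cast
          ring
  calc frobeniusNorm N⁻¹ = Real.sqrt (∑ i, ∑ j, (N⁻¹ i j) ^ 2) := rfl
    _ ≤ Real.sqrt (((p : ℝ) + q) / δ ^ 2) := Real.sqrt_le_sqrt hsum
    _ ≤ Real.sqrt ((p + q) / δ ^ 2) + 1 := by linarith
end

section
/- Let H₁ and H₂ be real Hilbert spaces and δ > 0. Let M₁₁ : H₁ → H₁ and M₂₂ : H₂ → H₂ be bounded self-adjoint linear operators with ⟨M₁₁u, u⟩ ≥ δ‖u‖² for all u ∈ H₁ and ⟨M₂₂v, v⟩ ≤ −δ‖v‖² for all v ∈ H₂, and let M₁₂ : H₂ → H₁ be a bounded linear operator with adjoint M₁₂* : H₁ → H₂. Define the bounded self-adjoint operator M on H := H₁ × H₂ by M(u, v) := (M₁₁u + M₁₂v, M₁₂*u + M₂₂v), and set Φ := M₂₂ − M₁₂* M₁₁⁻¹ M₁₂. Then M is bijective with bounded inverse given by M⁻¹(x, y) = ( (M₁₁⁻¹ + (M₁₁⁻¹M₁₂) Φ⁻¹ (M₁₁⁻¹M₁₂)*) x − (M₁₁⁻¹M₁₂) Φ⁻¹ y , −Φ⁻¹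 (M₁₁⁻¹M₁₂)* x + Φ⁻¹ y ), and moreover ‖M⁻¹‖ ≤ 2/δ + 2‖M‖/δ² + ‖M‖²/δ³. -/
set_option maxHeartbeats 1000000


open scoped RealInnerProductSpace
open ContinuousLinearMap

variable {H₁ H₂ : Type*}
  [NormedAddCommGroup H₁] [InnerProductSpace ℝ H₁] [CompleteSpace H₁]
  [NormedAddCommGroup H₂] [InnerProductSpace ℝ H₂] [CompleteSpace H₂]

/-- The element `(u, v)` of the Hilbert space `H₁ × H₂` (with the `L²` product structure). -/
noncomputable def pairL2 (u : H₁) (v : H₂) : WithLp 2 (H₁ × H₂) :=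
  (WithLp.equiv 2 (H₁ × H₂)).symm (u, v)

/-- The block operator `M(u, v) = (M₁₁ u + M₁₂ v, M₁₂* u + M₂₂ v)` on the Hilbert space
`H₁ × H₂` (with the `L²` product structure). -/
noncomputable def blockOp (M₁₁ : H₁ →L[ℝ] H₁) (M₂₂ : H₂ →L[ℝ] H₂) (M₁₂ : H₂ →L[ℝ] H₁) :
    WithLp 2 (H₁ × H₂) →L[ℝ] WithLp 2 (H₁ × H₂) :=
  ((WithLp.prodContinuousLinearEquiv 2 ℝ H₁ H₂).symm.toContinuousLinearMap).comp
    ((((M₁₁.comp (ContinuousLinearMap.fst ℝ H₁ H₂)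
          + M₁₂.comp (ContinuousLinearMap.snd ℝ H₁ H₂)).prod
        ((ContinuousLinearMap.adjoint M₁₂).comp (ContinuousLinearMap.fst ℝ H₁ H₂)
          + M₂₂.comp (ContinuousLinearMap.snd ℝ H₁ H₂)))).comp
      (WithLp.prodContinuousLinearEquiv 2 ℝ H₁ H₂).toContinuousLinearMap)

/-- General 4-block operator on `H₁ × H₂`. -/
noncomputable def block4 (A : H₁ →L[ℝ] H₁) (B : H₂ →L[ℝ] H₁) (C : H₁ →L[ℝ] H₂)
    (D : H₂ →L[ℝ] H₂) : WithLp 2 (H₁ × H₂) →L[ℝ] WithLp 2 (H₁ × H₂) :=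
  ((WithLp.prodContinuousLinearEquiv 2 ℝ H₁ H₂).symm.toContinuousLinearMap).comp
    ((((A.comp (ContinuousLinearMap.fst ℝ H₁ H₂)
          + B.comp (ContinuousLinearMap.snd ℝ H₁ H₂)).prod
        (C.comp (ContinuousLinearMap.fst ℝ H₁ H₂)
          + D.comp (ContinuousLinearMap.snd ℝ H₁ H₂)))).comp
      (WithLp.prodContinuousLinearEquiv 2 ℝ H₁ H₂).toContinuousLinearMap)

theorem block4_apply (A : H₁ →L[ℝ] H₁) (B : H₂ →L[ℝ] H₁) (C : H₁ →L[ℝ] H₂) (D : H₂ →L[ℝ] H₂)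
    (x : H₁) (y : H₂) : block4 A B C D (pairL2 x y) = pairL2 (A x + B y) (C x + D y) := rfl

theorem pairL2_surj (z : WithLp 2 (H₁ × H₂)) : ∃ x y, z = pairL2 x y := ⟨z.fst, z.snd, rfl⟩

theorem pairL2_congr {a c : H₁} {b d : H₂} (h1 : a = c) (h2 : b = d) :
    pairL2 a b = pairL2 c d := by rw [h1, h2]

theorem norm_pairL2_sq (x : H₁) (y : H₂) : ‖pairL2 x y‖ ^ 2 = ‖x‖ ^ 2 + ‖y‖ ^ 2 :=
  WithLp.prod_norm_sq_eq_of_L2 _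

theorem le_of_sq_le_sq' {a b : ℝ} (ha : 0 ≤ a) (hb : 0 ≤ b) (h : a ^ 2 ≤ b ^ 2) : a ≤ b := by
  nlinarith

theorem norm_fst_le_pairL2 (x : H₁) (y : H₂) : ‖x‖ ≤ ‖pairL2 x y‖ :=
  le_of_sq_le_sq' (norm_nonneg _) (norm_nonneg _)
    (by rw [norm_pairL2_sq]; nlinarith [sq_nonneg ‖y‖])

theorem norm_snd_le_pairL2 (x : H₁) (y : H₂) : ‖y‖ ≤ ‖pairL2 x y‖ :=
  le_of_sq_le_sq' (norm_nonneg _) (norm_nonneg _)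
    (by rw [norm_pairL2_sq]; nlinarith [sq_nonneg ‖x‖])

theorem norm_pairL2_le (x : H₁) (y : H₂) : ‖pairL2 x y‖ ≤ ‖x‖ + ‖y‖ :=
  le_of_sq_le_sq' (norm_nonneg _) (by positivity)
    (by rw [norm_pairL2_sq]; nlinarith [norm_nonneg x, norm_nonneg y, mul_nonneg (norm_nonneg x) (norm_nonneg y)])

theorem coercive_inv {H : Type*} [NormedAddCommGroup H] [InnerProductSpace ℝ H] [CompleteSpace H]
    (δ : ℝ) (hδ : 0 < δ) (A : H →L[ℝ] H) (hA : ∀ u : H, δ * ‖u‖ ^ 2 ≤ ⟪A u, u⟫) :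
    ∃ Ainv : H →L[ℝ] H, A.comp Ainv = ContinuousLinearMap.id ℝ H ∧
      Ainv.comp A = ContinuousLinearMap.id ℝ H ∧ ‖Ainv‖ ≤ 1 / δ := by
  set B : H →L[ℝ] H →L[ℝ] ℝ := (innerSL ℝ).comp A with hB
  have hBc : IsCoercive B := by
    refine ⟨δ, hδ, fun u => ?_⟩
    have := hA u
    simpa [hB, mul_assoc, pow_two] using this
  set e := hBc.continuousLinearEquivOfBilin with he
  have hAe : ∀ v : H, A v = e v := by
    intro v
    apply ext_inner_right ℝ
    intro w
    rw [hBc.continuousLinearEquivOfBilin_apply]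
    rfl
  have hlow : ∀ u : H, δ * ‖u‖ ≤ ‖A u‖ := by
    intro u
    rcases eq_or_ne u 0 with rfl | hu
    · simp
    · have h1 : δ * ‖u‖ * ‖u‖ ≤ ‖A u‖ * ‖u‖ := by
        calc δ * ‖u‖ * ‖u‖ = δ * ‖u‖ ^ 2 := by ring
        _ ≤ ⟪A u, u⟫ := hA u
        _ ≤ ‖A u‖ * ‖u‖ := real_inner_le_norm _ _
      exact le_of_mul_le_mul_right h1 (norm_pos_iff.mpr hu)
  refine ⟨e.symm.toContinuousLinearMap, ?_, ?_, ?_⟩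
  · ext x; simp [hAe]
  · ext x
    have : e.symm (A x) = e.symm (e x) := by rw [hAe]
    simpa using this
  · apply ContinuousLinearMap.opNorm_le_bound _ (by positivity)
    intro x
    have h1 : δ * ‖e.symm.toContinuousLinearMap x‖ ≤ ‖x‖ := by
      have := hlow (e.symm x)
      rw [hAe, ContinuousLinearEquiv.apply_symm_apply] at this
      simpa using this
    rw [div_mul_eq_mul_div, le_div_iff₀ hδ]
    linarith [h1]

/-- Operator-theoretic core of Theorem 3.3 and Proposition 3.5: the block operator `M`
is boundedly invertible, with inverse given by the Schur-complement block formula, and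
`‖M⁻¹‖ ≤ 2/δ + 2‖M‖/δ² + ‖M‖²/δ³`. -/
theorem hilbert_block_inverse
    (δ : ℝ) (hδ : 0 < δ)
    (M₁₁ : H₁ →L[ℝ] H₁) (M₂₂ : H₂ →L[ℝ] H₂) (M₁₂ : H₂ →L[ℝ] H₁)
    (h₁₁sa : IsSelfAdjoint M₁₁) (h₂₂sa : IsSelfAdjoint M₂₂)
    (h₁₁ : ∀ u : H₁, δ * ‖u‖ ^ 2 ≤ ⟪M₁₁ u, u⟫)
    (h₂₂ : ∀ v : H₂, ⟪M₂₂ v, v⟫ ≤ -δ * ‖v‖ ^ 2) :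
    ∃ (M₁₁inv : H₁ →L[ℝ] H₁) (Φinv : H₂ →L[ℝ] H₂)
      (Minv : WithLp 2 (H₁ × H₂) →L[ℝ] WithLp 2 (H₁ × H₂)),
      M₁₁.comp M₁₁inv = ContinuousLinearMap.id ℝ H₁ ∧
      M₁₁inv.comp M₁₁ = ContinuousLinearMap.id ℝ H₁ ∧
      (M₂₂ - (ContinuousLinearMap.adjoint M₁₂).comp (M₁₁inv.comp M₁₂)).comp Φinv
        = ContinuousLinearMap.id ℝ H₂ ∧
      Φinv.comp (M₂₂ - (ContinuousLinearMap.adjoint M₁₂).comp (M₁₁inv.comp M₁₂))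
        = ContinuousLinearMap.id ℝ H₂ ∧
      (blockOp M₁₁ M₂₂ M₁₂).comp Minv = ContinuousLinearMap.id ℝ (WithLp 2 (H₁ × H₂)) ∧
      Minv.comp (blockOp M₁₁ M₂₂ M₁₂) = ContinuousLinearMap.id ℝ (WithLp 2 (H₁ × H₂)) ∧
      (∀ (x : H₁) (y : H₂),
        Minv (pairL2 x y) =
          pairL2
            ((M₁₁inv
                + (M₁₁inv.comp M₁₂).comp
                    (Φinv.comp (ContinuousLinearMap.adjoint (M₁₁inv.comp M₁₂)))) x
              - ((M₁₁inv.comp M₁₂).comp Φinv) y)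
            (-(Φinv ((ContinuousLinearMap.adjoint (M₁₁inv.comp M₁₂)) x)) + Φinv y)) ∧
      ‖Minv‖ ≤ 2 / δ + 2 * ‖blockOp M₁₁ M₂₂ M₁₂‖ / δ ^ 2
        + ‖blockOp M₁₁ M₂₂ M₁₂‖ ^ 2 / δ ^ 3 := by
  obtain ⟨Ainv, hA1, hA2, hAn⟩ := coercive_inv δ hδ M₁₁ h₁₁
  have hA1' : ∀ x, M₁₁ (Ainv x) = x := fun x => by
    simpa using ContinuousLinearMap.ext_iff.1 hA1 x
  have hA2' : ∀ x, Ainv (M₁₁ x) = x := fun x => by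
    simpa using ContinuousLinearMap.ext_iff.1 hA2 x
  have h₁₁sa' : ContinuousLinearMap.adjoint M₁₁ = M₁₁ := h₁₁sa
  -- Ainv is self-adjoint
  have hAinv_sa : ContinuousLinearMap.adjoint Ainv = Ainv := by
    have h1 : (ContinuousLinearMap.adjoint Ainv).comp M₁₁ = ContinuousLinearMap.id ℝ H₁ := by
      have := congrArg ContinuousLinearMap.adjoint hA1
      rwa [adjoint_comp, h₁₁sa', adjoint_id] at this
    ext x
    have := ContinuousLinearMap.ext_iff.1 h1 (Ainv x)
    simp only [comp_apply, id_apply, hA1'] at this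
    simpa using this
  set C₀ := ContinuousLinearMap.adjoint M₁₂ with hC₀
  set Φ : H₂ →L[ℝ] H₂ := M₂₂ - C₀.comp (Ainv.comp M₁₂) with hΦ
  have hΦ' : ∀ v, Φ v = M₂₂ v - C₀ (Ainv (M₁₂ v)) := fun v => rfl
  -- -Φ is coercive
  have hnegΦ : ∀ v : H₂, δ * ‖v‖ ^ 2 ≤ ⟪(-Φ) v, v⟫ := by
    intro v
    have h1 : ⟪C₀ (Ainv (M₁₂ v)), v⟫ = ⟪Ainv (M₁₂ v), M₁₂ v⟫ := adjoint_inner_left M₁₂ _ _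
    have h2 : (0:ℝ) ≤ ⟪Ainv (M₁₂ v), M₁₂ v⟫ := by
      have h3 := h₁₁ (Ainv (M₁₂ v))
      have h4 : ⟪M₁₁ (Ainv (M₁₂ v)), Ainv (M₁₂ v)⟫ = ⟪Ainv (M₁₂ v), M₁₂ v⟫ := by
        rw [real_inner_comm]
        rw [hA1' (M₁₂ v)]
      nlinarith [sq_nonneg ‖Ainv (M₁₂ v)‖]
    have h5 := h₂₂ v
    have h6 : ⟪(-Φ) v, v⟫ = -⟪M₂₂ v, v⟫ + ⟪Ainv (M₁₂ v), M₁₂ v⟫ := by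
      simp only [ContinuousLinearMap.neg_apply, hΦ' v, inner_sub_left, inner_neg_left, h1]
      ring
    rw [h6]; nlinarith
  obtain ⟨N, hN1, hN2, hNn⟩ := coercive_inv δ hδ (-Φ) hnegΦ
  set Φinv : H₂ →L[ℝ] H₂ := -N with hΦinv
  have hΦ1 : Φ.comp Φinv = ContinuousLinearMap.id ℝ H₂ := by
    rw [hΦinv, ContinuousLinearMap.comp_neg, ← ContinuousLinearMap.neg_comp, hN1]
  have hΦ2 : Φinv.comp Φ = ContinuousLinearMap.id ℝ H₂ := by
    rw [hΦinv, ContinuousLinearMap.neg_comp, ← ContinuousLinearMap.comp_neg, hN2]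
  have hΦn : ‖Φinv‖ ≤ 1 / δ := by rw [hΦinv, norm_neg]; exact hNn
  have hΦ1' : ∀ t, Φ (Φinv t) = t := fun t => by
    simpa using ContinuousLinearMap.ext_iff.1 hΦ1 t
  have hΦ2' : ∀ t, Φinv (Φ t) = t := fun t => by
    simpa using ContinuousLinearMap.ext_iff.1 hΦ2 t
  set Bc : H₂ →L[ℝ] H₁ := Ainv.comp M₁₂ with hBc
  set Cc : H₁ →L[ℝ] H₂ := ContinuousLinearMap.adjoint Bc with hCc
  have hCc' : ∀ x, Cc x = C₀ (Ainv x) := by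
    intro x
    rw [hCc, hBc, adjoint_comp, hAinv_sa]
    rfl
  set P : H₁ →L[ℝ] H₁ := Ainv + Bc.comp (Φinv.comp Cc) with hP
  set Q : H₂ →L[ℝ] H₁ := -(Bc.comp Φinv) with hQ
  set R : H₁ →L[ℝ] H₂ := -(Φinv.comp Cc) with hR
  set S : H₂ →L[ℝ] H₂ := Φinv with hS
  set Minv := block4 P Q R S with hMinv
  have hblock : blockOp M₁₁ M₂₂ M₁₂ = block4 M₁₁ M₁₂ C₀ M₂₂ := rfl
  -- pointwise facts
  have k5 : ∀ t : H₂, M₂₂ (Φinv t) - C₀ (Ainv (M₁₂ (Φinv t))) = t := fun t => by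
    have := hΦ1' t; rwa [hΦ'] at this
  have k6 : ∀ t : H₂, Φinv (M₂₂ t - C₀ (Ainv (M₁₂ t))) = t := fun t => by
    have := hΦ2' t; rwa [hΦ'] at this
  refine ⟨Ainv, Φinv, Minv, hA1, hA2, hΦ1, hΦ2, ?_, ?_, ?_, ?_⟩
  · -- M ∘ Minv = id
    ext z
    obtain ⟨x, y, rfl⟩ := pairL2_surj z
    rw [ContinuousLinearMap.comp_apply, ContinuousLinearMap.id_apply, hblock, hMinv,
      block4_apply, block4_apply]
    refine pairL2_congr ?_ ?_
    · simp only [hP, hQ, hR, hS, ContinuousLinearMap.add_apply, ContinuousLinearMap.neg_apply,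
        ContinuousLinearMap.comp_apply, map_add, map_neg, hBc, hA1']
      abel
    · have e1 := k5 y
      simp only [hP, hQ, hR, hS, ContinuousLinearMap.add_apply, ContinuousLinearMap.neg_apply,
        ContinuousLinearMap.comp_apply, map_add, map_neg, hBc, hCc' x]
      have e2' : M₂₂ (Φinv (Cc x)) - C₀ (Ainv (M₁₂ (Φinv (Cc x)))) = Cc x := k5 (Cc x)
      rw [hCc' x] at e2'
      linear_combination (norm := abel) e1 - e2'
  · -- Minv ∘ M = id
    ext z
    obtain ⟨u, v, rfl⟩ := pairL2_surj z
    rw [ContinuousLinearMap.comp_apply, ContinuousLinearMap.id_apply, hblock, hMinv,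
      block4_apply, block4_apply]
    have kC1 : Cc (M₁₁ u) = C₀ u := by rw [hCc' (M₁₁ u), hA2']
    have kC2 : Cc (M₁₂ v) = M₂₂ v - Φ v := by rw [hCc' (M₁₂ v), hΦ' v]; abel
    refine pairL2_congr ?_ ?_
    · simp only [hP, hQ, hR, hS, ContinuousLinearMap.add_apply, ContinuousLinearMap.neg_apply,
        ContinuousLinearMap.comp_apply, map_add, map_neg, map_sub, hBc, hA2', kC1, kC2, hΦ2']
      abel_nf
      rw [show Φinv (Φ v) = v from hΦ2' v]; abel
    · simp only [hP, hQ, hR, hS, ContinuousLinearMap.add_apply, ContinuousLinearMap.neg_apply,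
        ContinuousLinearMap.comp_apply, map_add, map_neg, map_sub, kC1, kC2, hΦ2']
      abel_nf
      exact hΦ2' v
  · -- block formula
    intro x y
    rw [hMinv, block4_apply]
    refine pairL2_congr ?_ ?_
    · simp only [hP, hQ, hBc, hCc, ContinuousLinearMap.add_apply, ContinuousLinearMap.neg_apply,
        ContinuousLinearMap.comp_apply, sub_eq_add_neg]
      rfl
    · simp only [hR, hS, hCc, hBc, ContinuousLinearMap.neg_apply, ContinuousLinearMap.comp_apply]
  · -- norm bound
    set m := ‖blockOp M₁₁ M₂₂ M₁₂‖ with hm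
    have hm0 : 0 ≤ m := by rw [hm]; exact norm_nonneg (blockOp M₁₁ M₂₂ M₁₂)
    have hM₁₂ : ‖M₁₂‖ ≤ m := by
      apply ContinuousLinearMap.opNorm_le_bound _ hm0
      intro v
      have h1 : blockOp M₁₁ M₂₂ M₁₂ (pairL2 0 v) = pairL2 (M₁₂ v) (M₂₂ v) := by
        rw [hblock, block4_apply]
        exact pairL2_congr (by simp) (by simp)
      have h2 : ‖M₁₂ v‖ ≤ ‖blockOp M₁₁ M₂₂ M₁₂ (pairL2 0 v)‖ := by
        rw [h1]; exact norm_fst_le_pairL2 _ _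
      have h3 : ‖pairL2 (0:H₁) v‖ = ‖v‖ := by
        apply le_antisymm
        · simpa using norm_pairL2_le (0:H₁) v
        · exact norm_snd_le_pairL2 _ _
      calc ‖M₁₂ v‖ ≤ ‖blockOp M₁₁ M₂₂ M₁₂ (pairL2 0 v)‖ := h2
        _ ≤ m * ‖pairL2 (0:H₁) v‖ := ContinuousLinearMap.le_opNorm _ _
        _ = m * ‖v‖ := by rw [h3]
    have hBn : ‖Bc‖ ≤ 1 / δ * m :=
      le_trans (ContinuousLinearMap.opNorm_comp_le _ _)
        (mul_le_mul hAn hM₁₂ (norm_nonneg _) (by positivity))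
    have hCn : ‖Cc‖ ≤ 1 / δ * m := by
      rw [hCc]
      calc ‖ContinuousLinearMap.adjoint Bc‖ = ‖Bc‖ := ContinuousLinearMap.adjoint.norm_map Bc
        _ ≤ 1 / δ * m := hBn
    have hPn : ‖P‖ ≤ 1 / δ + (1 / δ * m) * (1 / δ * (1 / δ * m)) := by
      refine le_trans (norm_add_le _ _) (add_le_add hAn ?_)
      refine le_trans (ContinuousLinearMap.opNorm_comp_le _ _) ?_
      refine mul_le_mul hBn ?_ (norm_nonneg _) (by positivity)
      refine le_trans (ContinuousLinearMap.opNorm_comp_le _ _) ?_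
      exact mul_le_mul hΦn hCn (norm_nonneg _) (by positivity)
    have hQn : ‖Q‖ ≤ (1 / δ * m) * (1 / δ) := by
      rw [hQ, norm_neg]
      refine le_trans (ContinuousLinearMap.opNorm_comp_le _ _) ?_
      exact mul_le_mul hBn hΦn (norm_nonneg _) (mul_nonneg (by positivity) hm0)
    have hRn : ‖R‖ ≤ (1 / δ) * (1 / δ * m) := by
      rw [hR, norm_neg]
      refine le_trans (ContinuousLinearMap.opNorm_comp_le _ _) ?_
      exact mul_le_mul hΦn hCn (norm_nonneg _) (by positivity)
    have hSn : ‖S‖ ≤ 1 / δ := by rw [hS]; exact hΦn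
    have hK0 : (0:ℝ) ≤ 2 / δ + 2 * m / δ ^ 2 + m ^ 2 / δ ^ 3 := by positivity
    apply ContinuousLinearMap.opNorm_le_bound _ hK0
    intro z
    obtain ⟨x, y, rfl⟩ := pairL2_surj z
    have hx : ‖x‖ ≤ ‖pairL2 x y‖ := norm_fst_le_pairL2 _ _
    have hy : ‖y‖ ≤ ‖pairL2 x y‖ := norm_snd_le_pairL2 _ _
    have step1 : ‖Minv (pairL2 x y)‖ ≤ ‖P x + Q y‖ + ‖R x + S y‖ := by
      rw [hMinv, block4_apply]
      exact norm_pairL2_le _ _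
    have step2 : ‖P x + Q y‖ + ‖R x + S y‖
        ≤ (‖P‖ + ‖R‖) * ‖x‖ + (‖Q‖ + ‖S‖) * ‖y‖ := by
      have l1 : ‖P x + Q y‖ ≤ ‖P‖ * ‖x‖ + ‖Q‖ * ‖y‖ :=
        le_trans (norm_add_le _ _)
          (add_le_add (ContinuousLinearMap.le_opNorm P x) (ContinuousLinearMap.le_opNorm Q y))
      have l2 : ‖R x + S y‖ ≤ ‖R‖ * ‖x‖ + ‖S‖ * ‖y‖ :=
        le_trans (norm_add_le _ _)
          (add_le_add (ContinuousLinearMap.le_opNorm R x) (ContinuousLinearMap.le_opNorm S y))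
      calc ‖P x + Q y‖ + ‖R x + S y‖ ≤ (‖P‖ * ‖x‖ + ‖Q‖ * ‖y‖) + (‖R‖ * ‖x‖ + ‖S‖ * ‖y‖) :=
            add_le_add l1 l2
        _ = (‖P‖ + ‖R‖) * ‖x‖ + (‖Q‖ + ‖S‖) * ‖y‖ := by ring
    have step3 : (‖P‖ + ‖R‖) * ‖x‖ + (‖Q‖ + ‖S‖) * ‖y‖
        ≤ (2 / δ + 2 * m / δ ^ 2 + m ^ 2 / δ ^ 3) * ‖pairL2 x y‖ := by
      have c1 : ‖P‖ + ‖R‖ + (‖Q‖ + ‖S‖) ≤ 2 / δ + 2 * m / δ ^ 2 + m ^ 2 / δ ^ 3 := by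
        have e1 : 1 / δ + (1 / δ * m) * (1 / δ * (1 / δ * m)) + (1 / δ) * (1 / δ * m)
            + ((1 / δ * m) * (1 / δ) + 1 / δ) = 2 / δ + 2 * m / δ ^ 2 + m ^ 2 / δ ^ 3 := by
          field_simp; ring
        linarith
      have hPR : 0 ≤ ‖P‖ + ‖R‖ := add_nonneg (norm_nonneg P) (norm_nonneg R)
      have hQS : 0 ≤ ‖Q‖ + ‖S‖ := add_nonneg (norm_nonneg Q) (norm_nonneg S)
      calc (‖P‖ + ‖R‖) * ‖x‖ + (‖Q‖ + ‖S‖) * ‖y‖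
          ≤ (‖P‖ + ‖R‖) * ‖pairL2 x y‖ + (‖Q‖ + ‖S‖) * ‖pairL2 x y‖ :=
            add_le_add (mul_le_mul_of_nonneg_left hx hPR) (mul_le_mul_of_nonneg_left hy hQS)
        _ = (‖P‖ + ‖R‖ + (‖Q‖ + ‖S‖)) * ‖pairL2 x y‖ := by ring
        _ ≤ (2 / δ + 2 * m / δ ^ 2 + m ^ 2 / δ ^ 3) * ‖pairL2 x y‖ :=
            mul_le_mul_of_nonneg_right c1 (norm_nonneg _)
    calc ‖Minv (pairL2 x y)‖ ≤ ‖P x + Q y‖ + ‖R x + S y‖ := step1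
      _ ≤ (‖P‖ + ‖R‖) * ‖x‖ + (‖Q‖ + ‖S‖) * ‖y‖ := step2
      _ ≤ (2 / δ + 2 * m / δ ^ 2 + m ^ 2 / δ ^ 3) * ‖pairL2 x y‖ := step3
end

section
/- Let H₁ and H₂ be real Hilbert spaces and δ > 0. Let M₁₁ : H₁ → H₁ and M₂₂ : H₂ → H₂ be bounded self-adjoint linear operators with ⟨M₁₁u, u⟩ ≥ δ‖u‖² for all u ∈ H₁ and ⟨M₂₂v, v⟩ ≤ −δ‖v‖² for all v ∈ H₂, and let M₁₂ : H₂ → H₁ be a bounded linear operator with adjoint M₁₂* : H₁ → H₂. Define M on H := H₁ × H₂ by M(u, v) := (M₁₁u + M₁₂v, M₁₂*u + M₂₂v). Let k ∈ H and c ∈ ℝ, and define J : H → ℝ by J(w) := ⟨Mw, w⟩ + 2⟨k, w⟩ + c. Then there exists a unique pair (ū, v̄) ∈ H such that J(ū, v) ≤ J(ū, v̄) ≤ J(u, v̄) for all u ∈ H₁ and v ∈ H₂, and it is given by (ū, v̄) = −M⁻¹k. -/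
open scoped RealInnerProductSpace
open ContinuousLinearMap

variable {H₁ H₂ : Type*}
  [NormedAddCommGroup H₁] [InnerProductSpace ℝ H₁] [CompleteSpace H₁]
  [NormedAddCommGroup H₂] [InnerProductSpace ℝ H₂] [CompleteSpace H₂]

/-- The quadratic functional `J(w) = ⟨Mw, w⟩ + 2⟨k, w⟩ + c` on the Hilbert space `H₁ × H₂`. -/
noncomputable def quadJ (M : WithLp 2 (H₁ × H₂) →L[ℝ] WithLp 2 (H₁ × H₂))
    (k : WithLp 2 (H₁ × H₂)) (c : ℝ) (w : WithLp 2 (H₁ × H₂)) : ℝ :=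
  ⟪M w, w⟫ + 2 * ⟪k, w⟫ + c

/-- `w = (ū, v̄)` is a saddle point of `J`: `J(ū, v) ≤ J(ū, v̄) ≤ J(u, v̄)` for all `u, v`. -/
def IsSaddle (J : WithLp 2 (H₁ × H₂) → ℝ) (w : WithLp 2 (H₁ × H₂)) : Prop :=
  ∀ (u : H₁) (v : H₂),
    J (pairL2 ((WithLp.equiv 2 (H₁ × H₂)) w).1 v) ≤ J w ∧
    J w ≤ J (pairL2 u ((WithLp.equiv 2 (H₁ × H₂)) w).2)

set_option linter.unusedSectionVars false

section Aux

variable (M₁₁ : H₁ →L[ℝ] H₁) (M₂₂ : H₂ →L[ℝ] H₂) (M₁₂ : H₂ →L[ℝ] H₁)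

@[simp] lemma pairL2_fst (u : H₁) (v : H₂) : (pairL2 u v : WithLp 2 (H₁ × H₂)).fst = u := rfl
@[simp] lemma pairL2_snd (u : H₁) (v : H₂) : (pairL2 u v : WithLp 2 (H₁ × H₂)).snd = v := rfl

lemma pairL2_eq_self (w : WithLp 2 (H₁ × H₂)) : pairL2 w.fst w.snd = w := rfl

lemma blockOp_apply' (w : WithLp 2 (H₁ × H₂)) :
    blockOp M₁₁ M₂₂ M₁₂ w
      = pairL2 (M₁₁ w.fst + M₁₂ w.snd) (ContinuousLinearMap.adjoint M₁₂ w.fst + M₂₂ w.snd) := by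
  simp [blockOp, pairL2]

lemma inner_blockOp (w z : WithLp 2 (H₁ × H₂)) :
    ⟪blockOp M₁₁ M₂₂ M₁₂ w, z⟫
      = ⟪M₁₁ w.fst, z.fst⟫ + ⟪M₁₂ w.snd, z.fst⟫
        + ⟪ContinuousLinearMap.adjoint M₁₂ w.fst, z.snd⟫ + ⟪M₂₂ w.snd, z.snd⟫ := by
  rw [blockOp_apply', WithLp.prod_inner_apply]; simp only [WithLp.ofLp_fst, WithLp.ofLp_snd]
  rw [pairL2_fst, pairL2_snd,
    inner_add_left, inner_add_left]
  ring

lemma blockOp_symm (h₁₁sa : IsSelfAdjoint M₁₁) (h₂₂sa : IsSelfAdjoint M₂₂)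
    (w z : WithLp 2 (H₁ × H₂)) :
    ⟪blockOp M₁₁ M₂₂ M₁₂ w, z⟫ = ⟪w, blockOp M₁₁ M₂₂ M₁₂ z⟫ := by
  rw [show (inner ℝ w (blockOp M₁₁ M₂₂ M₁₂ z) : ℝ) = inner ℝ (blockOp M₁₁ M₂₂ M₁₂ z) w
    from real_inner_comm _ _, inner_blockOp, inner_blockOp]
  have e1 : ⟪M₁₁ w.fst, z.fst⟫ = ⟪M₁₁ z.fst, w.fst⟫ := by
    rw [real_inner_comm, ← h₁₁sa.adjoint_eq, ContinuousLinearMap.adjoint_inner_left,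
      h₁₁sa.adjoint_eq]
  have e2 : ⟪M₂₂ w.snd, z.snd⟫ = ⟪M₂₂ z.snd, w.snd⟫ := by
    rw [real_inner_comm, ← h₂₂sa.adjoint_eq, ContinuousLinearMap.adjoint_inner_left,
      h₂₂sa.adjoint_eq]
  have e3 : ⟪M₁₂ w.snd, z.fst⟫ = ⟪ContinuousLinearMap.adjoint M₁₂ z.fst, w.snd⟫ := by
    rw [ContinuousLinearMap.adjoint_inner_left, real_inner_comm]
  have e4 : ⟪ContinuousLinearMap.adjoint M₁₂ w.fst, z.snd⟫ = ⟪M₁₂ z.snd, w.fst⟫ := by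
    rw [ContinuousLinearMap.adjoint_inner_left, real_inner_comm]
  rw [e1, e2, e3, e4]; ring

/-- The sign-flip operator `T(u,v) = (u, -v)`. -/
noncomputable def flipOp : WithLp 2 (H₁ × H₂) →L[ℝ] WithLp 2 (H₁ × H₂) :=
  blockOp 1 (-1) 0

lemma flipOp_apply (w : WithLp 2 (H₁ × H₂)) :
    (flipOp : WithLp 2 (H₁ × H₂) →L[ℝ] WithLp 2 (H₁ × H₂)) w = pairL2 w.fst (-w.snd) := by
  rw [flipOp, blockOp_apply']
  simp [pairL2]

@[simp] lemma flipOp_flipOp (w : WithLp 2 (H₁ × H₂)) :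
    (flipOp : WithLp 2 (H₁ × H₂) →L[ℝ] WithLp 2 (H₁ × H₂)) (flipOp w) = w := by
  rw [flipOp_apply, flipOp_apply]
  simp only [pairL2_fst, pairL2_snd, neg_neg]
  exact pairL2_eq_self w

end Aux

set_option maxHeartbeats 1000000 in
/-- Abstract content of Theorem 3.3: existence and uniqueness of the saddle point of
`J(w) = ⟨Mw, w⟩ + 2⟨k, w⟩ + c`, given explicitly by `-M⁻¹ k`. -/
theorem saddle_point_exists_unique
    (δ : ℝ) (hδ : 0 < δ)
    (M₁₁ : H₁ →L[ℝ] H₁) (M₂₂ : H₂ →L[ℝ] H₂) (M₁₂ : H₂ →L[ℝ] H₁)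
    (h₁₁sa : IsSelfAdjoint M₁₁) (h₂₂sa : IsSelfAdjoint M₂₂)
    (h₁₁ : ∀ u : H₁, δ * ‖u‖ ^ 2 ≤ ⟪M₁₁ u, u⟫)
    (h₂₂ : ∀ v : H₂, ⟪M₂₂ v, v⟫ ≤ -δ * ‖v‖ ^ 2)
    (k : WithLp 2 (H₁ × H₂)) (c : ℝ) :
    ∃ Minv : WithLp 2 (H₁ × H₂) →L[ℝ] WithLp 2 (H₁ × H₂),
      (blockOp M₁₁ M₂₂ M₁₂).comp Minv = ContinuousLinearMap.id ℝ (WithLp 2 (H₁ × H₂)) ∧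
      Minv.comp (blockOp M₁₁ M₂₂ M₁₂) = ContinuousLinearMap.id ℝ (WithLp 2 (H₁ × H₂)) ∧
      (∃! w : WithLp 2 (H₁ × H₂), IsSaddle (quadJ (blockOp M₁₁ M₂₂ M₁₂) k c) w) ∧
      (∀ w : WithLp 2 (H₁ × H₂),
        IsSaddle (quadJ (blockOp M₁₁ M₂₂ M₁₂) k c) w → w = -(Minv k)) := by
  set M := blockOp M₁₁ M₂₂ M₁₂ with hM
  set T : WithLp 2 (H₁ × H₂) →L[ℝ] WithLp 2 (H₁ × H₂) := flipOp with hT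
  -- coercivity of T ∘ M
  have key : ∀ w : WithLp 2 (H₁ × H₂), δ * ‖w‖ * ‖w‖ ≤ ⟪T (M w), w⟫ := by
    intro w
    have hTM : ⟪T (M w), w⟫ = ⟪M₁₁ w.fst, w.fst⟫ - ⟪M₂₂ w.snd, w.snd⟫ := by
      rw [hT, flipOp_apply, hM, blockOp_apply']
      rw [WithLp.prod_inner_apply]; simp only [WithLp.ofLp_fst, WithLp.ofLp_snd]
      simp only [pairL2_fst, pairL2_snd, inner_add_left, inner_neg_left]
      have : ⟪M₁₂ w.snd, w.fst⟫ = ⟪ContinuousLinearMap.adjoint M₁₂ w.fst, w.snd⟫ := by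
        rw [ContinuousLinearMap.adjoint_inner_left, real_inner_comm]
      rw [this]; ring
    have hnorm : ‖w‖ ^ 2 = ‖w.fst‖ ^ 2 + ‖w.snd‖ ^ 2 := WithLp.prod_norm_sq_eq_of_L2 w
    have h1 := h₁₁ w.fst
    have h2 := h₂₂ w.snd
    have : δ * ‖w‖ * ‖w‖ = δ * ‖w‖ ^ 2 := by ring
    rw [this, hnorm, hTM]
    nlinarith
  -- the bilinear form and Lax-Milgram
  set B : WithLp 2 (H₁ × H₂) →L[ℝ] WithLp 2 (H₁ × H₂) →L[ℝ] ℝ :=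
    (innerSL ℝ).comp (T.comp M) with hB
  have hBapp : ∀ w z, B w z = ⟪T (M w), z⟫ := fun _ _ => rfl
  have coer : IsCoercive B := ⟨δ, hδ, fun w => by rw [hBapp]; exact key w⟩
  set E := coer.continuousLinearEquivOfBilin with hE
  have hEeq : ∀ w, E w = T (M w) := by
    intro w
    apply ext_inner_right ℝ
    intro z
    rw [coer.continuousLinearEquivOfBilin_apply, hBapp]
  set Minv : WithLp 2 (H₁ × H₂) →L[ℝ] WithLp 2 (H₁ × H₂) :=
    (E.symm.toContinuousLinearMap).comp T with hMinv
  have hMinv_apply : ∀ w, Minv w = E.symm (T w) := fun _ => rfl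
  have left_inv : ∀ w, M (Minv w) = w := by
    intro w
    have h1 : E (E.symm (T w)) = T w := E.apply_symm_apply _
    rw [hEeq] at h1
    have := congrArg T h1
    rw [flipOp_flipOp, flipOp_flipOp] at this
    rw [hMinv_apply]
    exact this
  have right_inv : ∀ w, Minv (M w) = w := by
    intro w
    rw [hMinv_apply, ← hEeq, E.symm_apply_apply]
  -- self-adjointness of M
  have Msymm : ∀ w z, ⟪M w, z⟫ = ⟪w, M z⟫ := blockOp_symm M₁₁ M₂₂ M₁₂ h₁₁sa h₂₂sa
  -- quadratic expansion
  have expand : ∀ w h : WithLp 2 (H₁ × H₂),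
      quadJ M k c (w + h) = quadJ M k c w + 2 * ⟪M w + k, h⟫ + ⟪M h, h⟫ := by
    intro w h
    simp only [quadJ, map_add, inner_add_left, inner_add_right]
    have : ⟪M h, w⟫ = ⟪M w, h⟫ := by rw [Msymm, real_inner_comm]
    rw [this]; ring
  -- saddle characterization
  have saddle_iff : ∀ w : WithLp 2 (H₁ × H₂),
      IsSaddle (quadJ M k c) w ↔ M w + k = 0 := by
    intro w
    constructor
    · intro hs
      set g := M w + k with hg
      -- first component
      have hcomp : ∀ a : H₁, 0 ≤ 2 * ⟪g.fst, a⟫ + ⟪M₁₁ a, a⟫ := by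
        intro a
        have h := (hs (w.fst + a) w.snd).2
        have hpair : pairL2 (w.fst + a) (((WithLp.equiv 2 (H₁ × H₂)) w).2)
            = w + pairL2 a 0 := by
          apply (WithLp.equiv 2 (H₁ × H₂)).injective
          ext <;> simp [pairL2]
        rw [hpair, expand] at h
        have hin : ⟪g, (pairL2 a 0 : WithLp 2 (H₁ × H₂))⟫ = ⟪g.fst, a⟫ := by
          rw [WithLp.prod_inner_apply]; simp
        have hq : ⟪M (pairL2 a 0 : WithLp 2 (H₁ × H₂)), (pairL2 a 0 : WithLp 2 (H₁ × H₂))⟫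
            = ⟪M₁₁ a, a⟫ := by
          rw [hM, inner_blockOp]; simp
        rw [hin, hq] at h
        linarith
      have hg1 : g.fst = 0 := by
        by_contra hne
        have hgn : 0 < ‖g.fst‖ := norm_pos_iff.mpr hne
        have hA : 0 < ⟪M₁₁ g.fst, g.fst⟫ := lt_of_lt_of_le (by positivity) (h₁₁ g.fst)
        set A := ⟪M₁₁ g.fst, g.fst⟫ with hAdef
        set t : ℝ := ‖g.fst‖ ^ 2 / A with ht
        have := hcomp (-(t • g.fst))
        have hlin : ⟪g.fst, -(t • g.fst)⟫ = -(t * ‖g.fst‖ ^ 2) := by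
          rw [inner_neg_right, real_inner_smul_right, real_inner_self_eq_norm_sq]
        have hquad : ⟪M₁₁ (-(t • g.fst)), -(t • g.fst)⟫ = t ^ 2 * A := by
          rw [map_neg, map_smul, inner_neg_neg, real_inner_smul_left,
            real_inner_smul_right, hAdef]
          ring
        rw [hlin, hquad] at this
        have ht' : t = ‖g.fst‖ ^ 2 / A := ht
        have : 0 ≤ 2 * -(‖g.fst‖ ^ 2 / A * ‖g.fst‖ ^ 2) + (‖g.fst‖ ^ 2 / A) ^ 2 * A := by
          rw [← ht']; linarith
        have hcontr : 2 * -(‖g.fst‖ ^ 2 / A * ‖g.fst‖ ^ 2) + (‖g.fst‖ ^ 2 / A) ^ 2 * A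
            = -(‖g.fst‖ ^ 2 * ‖g.fst‖ ^ 2) / A := by field_simp; ring
        rw [hcontr] at this
        have : -(‖g.fst‖ ^ 2 * ‖g.fst‖ ^ 2) / A < 0 := by
          apply div_neg_of_neg_of_pos _ hA
          have h4 : 0 < ‖g.fst‖ ^ 2 * ‖g.fst‖ ^ 2 := mul_pos (pow_pos hgn 2) (pow_pos hgn 2)
          linarith
        linarith
      -- second component
      have hcomp2 : ∀ b : H₂, 2 * ⟪g.snd, b⟫ + ⟪M₂₂ b, b⟫ ≤ 0 := by
        intro b
        have h := (hs w.fst (w.snd + b)).1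
        have hpair : pairL2 (((WithLp.equiv 2 (H₁ × H₂)) w).1) (w.snd + b)
            = w + pairL2 0 b := by
          apply (WithLp.equiv 2 (H₁ × H₂)).injective
          ext <;> simp [pairL2]
        rw [hpair, expand] at h
        have hin : ⟪g, (pairL2 0 b : WithLp 2 (H₁ × H₂))⟫ = ⟪g.snd, b⟫ := by
          rw [WithLp.prod_inner_apply]; simp
        have hq : ⟪M (pairL2 0 b : WithLp 2 (H₁ × H₂)), (pairL2 0 b : WithLp 2 (H₁ × H₂))⟫
            = ⟪M₂₂ b, b⟫ := by
          rw [hM, inner_blockOp]; simp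
        rw [hin, hq] at h
        linarith
      have hg2 : g.snd = 0 := by
        by_contra hne
        have hgn : 0 < ‖g.snd‖ := norm_pos_iff.mpr hne
        have hC : ⟪M₂₂ g.snd, g.snd⟫ < 0 := by
          have h5 : 0 < δ * ‖g.snd‖ ^ 2 := mul_pos hδ (pow_pos hgn 2)
          have := h₂₂ g.snd
          linarith
        set C := ⟪M₂₂ g.snd, g.snd⟫ with hCdef
        set t : ℝ := -(‖g.snd‖ ^ 2) / C with ht
        have := hcomp2 (t • g.snd)
        have hlin : ⟪g.snd, t • g.snd⟫ = t * ‖g.snd‖ ^ 2 := by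
          rw [real_inner_smul_right, real_inner_self_eq_norm_sq]
        have hquad : ⟪M₂₂ (t • g.snd), t • g.snd⟫ = t ^ 2 * C := by
          rw [map_smul, real_inner_smul_left, real_inner_smul_right, hCdef]; ring
        rw [hlin, hquad] at this
        have ht' : t = -(‖g.snd‖ ^ 2) / C := ht
        have h0 : 2 * (-(‖g.snd‖ ^ 2) / C * ‖g.snd‖ ^ 2) + (-(‖g.snd‖ ^ 2) / C) ^ 2 * C ≤ 0 := by
          rw [← ht']; linarith
        have hcontr : 2 * (-(‖g.snd‖ ^ 2) / C * ‖g.snd‖ ^ 2) + (-(‖g.snd‖ ^ 2) / C) ^ 2 * C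
            = -(‖g.snd‖ ^ 2 * ‖g.snd‖ ^ 2) / C := by
          have hCne : C ≠ 0 := ne_of_lt hC
          field_simp; ring
        rw [hcontr] at h0
        have : 0 < -(‖g.snd‖ ^ 2 * ‖g.snd‖ ^ 2) / C := by
          apply div_pos_of_neg_of_neg _ hC
          have h4 : 0 < ‖g.snd‖ ^ 2 * ‖g.snd‖ ^ 2 := mul_pos (pow_pos hgn 2) (pow_pos hgn 2)
          linarith
        linarith
      have : g = 0 := by
        apply (WithLp.equiv 2 (H₁ × H₂)).injective
        ext
        · exact hg1
        · exact hg2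
      exact this
    · intro h0
      intro u v
      constructor
      · have hpair : pairL2 (((WithLp.equiv 2 (H₁ × H₂)) w).1) v
            = w + pairL2 0 (v - w.snd) := by
          apply (WithLp.equiv 2 (H₁ × H₂)).injective
          ext <;> simp [pairL2]
        rw [hpair, expand, h0]
        have hq : ⟪M (pairL2 0 (v - w.snd) : WithLp 2 (H₁ × H₂)),
            (pairL2 0 (v - w.snd) : WithLp 2 (H₁ × H₂))⟫ = ⟪M₂₂ (v - w.snd), v - w.snd⟫ := by
          rw [hM, inner_blockOp]; simp
        rw [hq]
        have := h₂₂ (v - w.snd)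
        simp only [inner_zero_left]
        nlinarith [norm_nonneg (v - w.snd)]
      · have hpair : pairL2 u (((WithLp.equiv 2 (H₁ × H₂)) w).2)
            = w + pairL2 (u - w.fst) 0 := by
          apply (WithLp.equiv 2 (H₁ × H₂)).injective
          ext <;> simp [pairL2]
        rw [hpair, expand, h0]
        have hq : ⟪M (pairL2 (u - w.fst) 0 : WithLp 2 (H₁ × H₂)),
            (pairL2 (u - w.fst) 0 : WithLp 2 (H₁ × H₂))⟫ = ⟪M₁₁ (u - w.fst), u - w.fst⟫ := by
          rw [hM, inner_blockOp]; simp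
        rw [hq]
        have := h₁₁ (u - w.fst)
        simp only [inner_zero_left]
        nlinarith [norm_nonneg (u - w.fst)]
  -- conclusion
  refine ⟨Minv, ?_, ?_, ?_, ?_⟩
  · ext w; exact left_inv w
  · ext w; exact right_inv w
  · refine ⟨-(Minv k), ?_, ?_⟩
    · apply (saddle_iff (-(Minv k))).mpr
      rw [map_neg, left_inv]
      exact neg_add_cancel k
    · intro w hw
      have hw' := (saddle_iff w).mp hw
      have hMw : M w = -k := by
        have := congrArg (fun x => x - k) hw'
        simpa [sub_eq_iff_eq_add, add_sub_cancel_right] using this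
      calc w = Minv (M w) := (right_inv w).symm
        _ = -(Minv k) := by rw [hMw, map_neg]
  · intro w hw
    have hw' := (saddle_iff w).mp hw
    have hMw : M w = -k := by
      have := congrArg (fun x => x - k) hw'
      simpa [sub_eq_iff_eq_add, add_sub_cancel_right] using this
    calc w = Minv (M w) := (right_inv w).symm
      _ = -(Minv k) := by rw [hMw, map_neg]
end

section
/- Fix positive integers n and m. Let A, C ∈ ℝ^{n×n}, B, D ∈ ℝ^{n×m}, Q ∈ ℝ^{n×n} symmetric, S ∈ ℝ^{m×n}, and R ∈ ℝ^{m×m} symmetric. Suppose the symmetric matrix P ∈ ℝ^{n×n} satisfies R + DᵀPD invertible and the algebraic Riccati equation PA + AᵀP + CᵀPC + Q − (PB + CᵀPD + Sᵀ)(R + DᵀPD)⁻¹(BᵀP + DᵀPC + S) = 0, and set Θ := −(R + DᵀPD)⁻¹(BᵀP + DᵀPC + S). Let T > 0 and let P_T : [0,T] → ℝ^{n×n} be differentiable with symmetric values, R + DᵀP_T(t)D invertible for all t ∈ [0,T], and satisfying P_T′(t) + P_T(t)A + AᵀP_T(t) + CᵀP_T(t)C + Q − (P_T(t)B + CᵀP_T(t)D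 + Sᵀ)(R + DᵀP_T(t)D)⁻¹(BᵀP_T(t) + DᵀP_T(t)C + S) = 0 on [0,T]. Set Θ_T(t) := −(R + DᵀP_T(t)D)⁻¹(BᵀP_T(t) + DᵀP_T(t)C + S) and Σ(t) := P − P_T(t). Then for all t ∈ [0,T]: (i) Θ − Θ_T(t) = −(R + DᵀP_T(t)D)⁻¹[BᵀΣ(t) + DᵀΣ(t)(C + DΘ)]; and (ii) Σ′(t) + Σ(t)(A + BΘ) + (A + BΘ)ᵀΣ(t) + (C + DΘ)ᵀΣ(t)(C + DΘ) + (Θ − Θ_T(t))ᵀ(R + DᵀP_T(t)D)(Θ − Θ_T(t)) = 0. -/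
open Matrix Set

attribute [local instance] Matrix.normedAddCommGroup Matrix.normedSpace

/-- The 'direct computation' at the start of the proof of Theorem 4.6: with
`Sig(t) = P - P_T(t)` (whose derivative is `-P_T′(t)`), the difference between the
algebraic and differential Riccati solutions satisfies a perturbed Lyapunov equation. -/
theorem riccati_difference_identities
    (n m : ℕ) (hn : 0 < n) (hm : 0 < m)
    (A C : Matrix (Fin n) (Fin n) ℝ) (B D : Matrix (Fin n) (Fin m) ℝ)
    (Q : Matrix (Fin n) (Fin n) ℝ) (hQ : Q.IsSymm)
    (S : Matrix (Fin m) (Fin n) ℝ)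
    (R : Matrix (Fin m) (Fin m) ℝ) (hR : R.IsSymm)
    (P : Matrix (Fin n) (Fin n) ℝ) (hP : P.IsSymm)
    (hPinv : IsUnit (R + Dᵀ * P * D))
    (hARE : P * A + Aᵀ * P + Cᵀ * P * C + Q
      - (P * B + Cᵀ * P * D + Sᵀ) * (R + Dᵀ * P * D)⁻¹ * (Bᵀ * P + Dᵀ * P * C + S) = 0)
    (Θ : Matrix (Fin m) (Fin n) ℝ)
    (hΘ : Θ = -(R + Dᵀ * P * D)⁻¹ * (Bᵀ * P + Dᵀ * P * C + S))
    (T : ℝ) (hT : 0 < T)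
    (PT PT' : ℝ → Matrix (Fin n) (Fin n) ℝ)
    (hPTsym : ∀ t ∈ Set.Icc (0:ℝ) T, (PT t).IsSymm)
    (hPTinv : ∀ t ∈ Set.Icc (0:ℝ) T, IsUnit (R + Dᵀ * PT t * D))
    (hderiv : ∀ t ∈ Set.Icc (0:ℝ) T, HasDerivWithinAt PT (PT' t) (Set.Icc 0 T) t)
    (hRic : ∀ t ∈ Set.Icc (0:ℝ) T,
      PT' t + PT t * A + Aᵀ * PT t + Cᵀ * PT t * C + Q
        - (PT t * B + Cᵀ * PT t * D + Sᵀ) * (R + Dᵀ * PT t * D)⁻¹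
            * (Bᵀ * PT t + Dᵀ * PT t * C + S) = 0)
    (ΘT : ℝ → Matrix (Fin m) (Fin n) ℝ)
    (hΘT : ∀ t, ΘT t = -(R + Dᵀ * PT t * D)⁻¹ * (Bᵀ * PT t + Dᵀ * PT t * C + S))
    (Sig : ℝ → Matrix (Fin n) (Fin n) ℝ) (hSig : ∀ t, Sig t = P - PT t) :
    ∀ t ∈ Set.Icc (0:ℝ) T,
      (Θ - ΘT t
        = -(R + Dᵀ * PT t * D)⁻¹ * (Bᵀ * Sig t + Dᵀ * Sig t * (C + D * Θ))) ∧
      (HasDerivWithinAt Sig (-(PT' t)) (Set.Icc 0 T) t ∧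
        -(PT' t) + Sig t * (A + B * Θ) + (A + B * Θ)ᵀ * Sig t
          + (C + D * Θ)ᵀ * Sig t * (C + D * Θ)
          + (Θ - ΘT t)ᵀ * (R + Dᵀ * PT t * D) * (Θ - ΘT t) = 0) := by
  intro t ht
  -- basic facts
  have hsym : (PT t)ᵀ = PT t := (hPTsym t ht).eq
  have hGdet : IsUnit (R + Dᵀ * P * D).det := (Matrix.isUnit_iff_isUnit_det _).mp hPinv
  have hGTdet : IsUnit (R + Dᵀ * PT t * D).det :=
    (Matrix.isUnit_iff_isUnit_det _).mp (hPTinv t ht)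
  have hG1 : (R + Dᵀ * P * D) * (R + Dᵀ * P * D)⁻¹ = 1 := Matrix.mul_nonsing_inv _ hGdet
  have hGT1 : (R + Dᵀ * PT t * D) * (R + Dᵀ * PT t * D)⁻¹ = 1 :=
    Matrix.mul_nonsing_inv _ hGTdet
  have hGT2 : (R + Dᵀ * PT t * D)⁻¹ * (R + Dᵀ * PT t * D) = 1 :=
    Matrix.nonsing_inv_mul _ hGTdet
  -- G Θ = -M
  have hGΘ : (R + Dᵀ * P * D) * Θ = -(Bᵀ * P + Dᵀ * P * C + S) := by
    rw [hΘ, Matrix.neg_mul, Matrix.mul_neg, ← Matrix.mul_assoc, hG1, Matrix.one_mul]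
  have hGTΘT : (R + Dᵀ * PT t * D) * ΘT t = -(Bᵀ * PT t + Dᵀ * PT t * C + S) := by
    rw [hΘT t, Matrix.neg_mul, Matrix.mul_neg, ← Matrix.mul_assoc, hGT1, Matrix.one_mul]
  have hinvM : (R + Dᵀ * P * D)⁻¹ * (Bᵀ * P + Dᵀ * P * C + S) = -Θ := by
    rw [hΘ, Matrix.neg_mul, neg_neg]
  have hinvMT : (R + Dᵀ * PT t * D)⁻¹ * (Bᵀ * PT t + Dᵀ * PT t * C + S) = -(ΘT t) := by
    rw [hΘT t, Matrix.neg_mul, neg_neg]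
  -- ARE in Θ-form
  have hARE2 : P * A + Aᵀ * P + Cᵀ * P * C + Q + (P * B + Cᵀ * P * D + Sᵀ) * Θ = 0 := by
    have h := sub_eq_zero.mp hARE
    rw [Matrix.mul_assoc (P * B + Cᵀ * P * D + Sᵀ), hinvM, Matrix.mul_neg] at h
    rw [h, neg_add_cancel]
  have hDRE2 : PT' t + PT t * A + Aᵀ * PT t + Cᵀ * PT t * C + Q
      + (PT t * B + Cᵀ * PT t * D + Sᵀ) * ΘT t = 0 := by
    have h := sub_eq_zero.mp (hRic t ht)
    rw [Matrix.mul_assoc (PT t * B + Cᵀ * PT t * D + Sᵀ), hinvMT, Matrix.mul_neg] at h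
    rw [h, neg_add_cancel]
  -- isolate -PT' t
  have h6 : PT' t + (PT t * A + Aᵀ * PT t + Cᵀ * PT t * C + Q
      + (PT t * B + Cᵀ * PT t * D + Sᵀ) * ΘT t) = 0 := by
    rw [← hDRE2]; abel
  have hneg : -(PT' t) = PT t * A + Aᵀ * PT t + Cᵀ * PT t * C + Q
      + (PT t * B + Cᵀ * PT t * D + Sᵀ) * ΘT t := neg_eq_of_add_eq_zero_right h6
  -- key identity (claim (i) in multiplied form)
  have hkey : (R + Dᵀ * PT t * D) * (Θ - ΘT t)
      = -(Bᵀ * (P - PT t) + Dᵀ * (P - PT t) * (C + D * Θ)) := by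
    calc (R + Dᵀ * PT t * D) * (Θ - ΘT t)
        = (R + Dᵀ * P * D) * Θ - Dᵀ * (P - PT t) * (D * Θ)
            - (R + Dᵀ * PT t * D) * ΘT t := by
          simp only [Matrix.add_mul, Matrix.mul_add, Matrix.sub_mul, Matrix.mul_sub,
            Matrix.mul_assoc]
          abel
      _ = -(Bᵀ * P + Dᵀ * P * C + S) - Dᵀ * (P - PT t) * (D * Θ)
            - -(Bᵀ * PT t + Dᵀ * PT t * C + S) := by rw [hGΘ, hGTΘT]
      _ = -(Bᵀ * (P - PT t) + Dᵀ * (P - PT t) * (C + D * Θ)) := by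
          simp only [Matrix.add_mul, Matrix.mul_add, Matrix.sub_mul, Matrix.mul_sub,
            Matrix.neg_mul, Matrix.mul_neg, neg_add, neg_sub, neg_neg,
            Matrix.mul_assoc]
          abel
  have hN : Bᵀ * (P - PT t) + Dᵀ * (P - PT t) * (C + D * Θ)
      = -((R + Dᵀ * PT t * D) * (Θ - ΘT t)) := by rw [hkey, neg_neg]
  -- claim (i)
  have claim1 : Θ - ΘT t
      = -(R + Dᵀ * PT t * D)⁻¹ * (Bᵀ * Sig t + Dᵀ * Sig t * (C + D * Θ)) := by
    simp only [hSig]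
    rw [hN, Matrix.neg_mul, Matrix.mul_neg, neg_neg, ← Matrix.mul_assoc, hGT2,
      Matrix.one_mul]
  refine ⟨claim1, ?_, ?_⟩
  · have hSf : Sig = fun s => P - PT s := funext hSig
    rw [hSf]
    have h := (hasDerivWithinAt_const t (Set.Icc 0 T) P).sub (hderiv t ht)
    rw [zero_sub] at h
    exact h
  -- claim (ii)
  · -- transpose symmetry of R + Dᵀ PT D
    have hGTsym : (R + Dᵀ * PT t * D)ᵀ = R + Dᵀ * PT t * D := by
      rw [Matrix.transpose_add, hR.eq, Matrix.transpose_mul, Matrix.transpose_mul,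
        Matrix.transpose_transpose, hsym, Matrix.mul_assoc]
    have h5 : (ΘT t)ᵀ * (R + Dᵀ * PT t * D) = -(PT t * B + Cᵀ * PT t * D + Sᵀ) := by
      have h := congrArg Matrix.transpose hGTΘT
      rw [Matrix.transpose_mul, hGTsym, Matrix.transpose_neg, Matrix.transpose_add,
        Matrix.transpose_add, Matrix.transpose_mul, Matrix.transpose_mul,
        Matrix.transpose_mul, Matrix.transpose_transpose, Matrix.transpose_transpose,
        hsym] at h
      rw [h, Matrix.mul_assoc]
    have hθtN : (ΘT t)ᵀ * (Bᵀ * (P - PT t) + Dᵀ * (P - PT t) * (C + D * Θ))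
        = (PT t * B + Cᵀ * PT t * D + Sᵀ) * Θ
          - (PT t * B + Cᵀ * PT t * D + Sᵀ) * ΘT t := by
      rw [hN, Matrix.mul_neg, ← Matrix.mul_assoc, h5, Matrix.neg_mul, neg_neg,
        Matrix.mul_sub]
    simp only [hSig]
    rw [hneg, Matrix.mul_assoc ((Θ - ΘT t)ᵀ), hkey]
    rw [show (Θ - ΘT t)ᵀ * -(Bᵀ * (P - PT t) + Dᵀ * (P - PT t) * (C + D * Θ))
        = -(Θᵀ * (Bᵀ * (P - PT t) + Dᵀ * (P - PT t) * (C + D * Θ)))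
          + (ΘT t)ᵀ * (Bᵀ * (P - PT t) + Dᵀ * (P - PT t) * (C + D * Θ)) from by
      rw [Matrix.transpose_sub, Matrix.sub_mul, Matrix.mul_neg, Matrix.mul_neg]
      abel]
    rw [hθtN, ← hARE2]
    simp only [Matrix.transpose_add, Matrix.transpose_mul, Matrix.mul_add,
      Matrix.add_mul, Matrix.mul_sub, Matrix.sub_mul, Matrix.neg_mul, Matrix.mul_neg,
      Matrix.mul_assoc]
    abel
end

section
/- Let 0 < ρ < λ, K > 0 and T > 0, and set ψ(t) := e^{−λt} + e^{−λ(T−t)} for t ∈ [0,T]. Suppose f : [0,T] → ℝ is differentiable, f(t) ≥ 0 for all t, and f′(t) ≤ (−ρ + Kψ(t)) f(t) + Kψ(t) for all t ∈ [0,T]. Then f(t) ≤ e^{2K/λ} [ f(0) e^{−ρt} + K( e^{−ρt}/(λ−ρ) + e^{−λ(T−t)}/(λ+ρ) ) ] for all t ∈ [0,T]. -/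
open Set Real

lemma hasDerivAt_exp_affine (a b s : ℝ) :
    HasDerivAt (fun x => Real.exp (a * x + b)) (a * Real.exp (a * s + b)) s := by
  have h : HasDerivAt (fun x : ℝ => a * x + b) a s := by
    simpa using ((hasDerivAt_id s).const_mul a).add_const b
  simpa [mul_comm] using h.exp

lemma integral_exp_mul' (c t : ℝ) (hc : c ≠ 0) :
    ∫ s in (0:ℝ)..t, Real.exp (c * s) = (Real.exp (c * t) - 1) / c := by
  have h : ∀ s ∈ Set.uIcc (0:ℝ) t,
      HasDerivAt (fun x => Real.exp (c * x) / c) (Real.exp (c * s)) s := by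
    intro s _
    have := (hasDerivAt_exp_affine c 0 s).div_const c
    simpa [add_zero, mul_div_assoc, mul_div_cancel_left₀ _ hc] using this
  rw [intervalIntegral.integral_eq_sub_of_hasDerivAt h
    (((Real.continuous_exp.comp (continuous_const.mul continuous_id)).intervalIntegrable 0 t))]
  field_simp
  simp

/-- Gronwall-type estimate with turnpike forcing `ψ(t) = e^{-λt} + e^{-λ(T-t)}`,
the final step in the proof of Proposition 5.2. -/
theorem gronwall_turnpike
    (ρ lam K T : ℝ) (hρ : 0 < ρ) (hρlam : ρ < lam) (hK : 0 < K) (hT : 0 < T)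
    (f f' : ℝ → ℝ)
    (hderiv : ∀ t ∈ Set.Icc (0:ℝ) T, HasDerivWithinAt f (f' t) (Set.Icc 0 T) t)
    (hnonneg : ∀ t ∈ Set.Icc (0:ℝ) T, 0 ≤ f t)
    (hineq : ∀ t ∈ Set.Icc (0:ℝ) T,
      f' t ≤ (-ρ + K * (Real.exp (-lam * t) + Real.exp (-lam * (T - t)))) * f t
        + K * (Real.exp (-lam * t) + Real.exp (-lam * (T - t)))) :
    ∀ t ∈ Set.Icc (0:ℝ) T,
      f t ≤ Real.exp (2 * K / lam)
        * (f 0 * Real.exp (-ρ * t)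
          + K * (Real.exp (-ρ * t) / (lam - ρ)
            + Real.exp (-lam * (T - t)) / (lam + ρ))) := by
  have hlam : 0 < lam := hρ.trans hρlam
  set ψ : ℝ → ℝ := fun s => Real.exp (-lam * s) + Real.exp (-lam * (T - s)) with hψdef
  set A : ℝ → ℝ := fun s => -ρ * s + K / lam * (1 - Real.exp (-lam * s))
      + K / lam * (Real.exp (-lam * (T - s)) - Real.exp (-lam * T)) with hAdef
  -- derivative of A
  have hAderiv : ∀ s : ℝ, HasDerivAt A (-ρ + K * ψ s) s := by
    intro s
    have h1 : HasDerivAt (fun x : ℝ => Real.exp (-lam * x)) (-lam * Real.exp (-lam * s)) s := by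
      simpa using hasDerivAt_exp_affine (-lam) 0 s
    have h2 : HasDerivAt (fun x : ℝ => Real.exp (-lam * (T - x)))
        (lam * Real.exp (-lam * (T - s))) s := by
      have heq : (fun x : ℝ => Real.exp (-lam * (T - x)))
          = fun x => Real.exp (lam * x + -(lam * T)) := by funext x; ring_nf
      have hv : -lam * (T - s) = lam * s + -(lam * T) := by ring
      rw [heq, hv]
      have h : HasDerivAt (fun x : ℝ => lam * x + -(lam * T)) lam s := by
        simpa using ((hasDerivAt_id s).const_mul lam).add_const (-(lam * T))
      simpa [mul_comm] using h.exp
    have t1 : HasDerivAt (fun x : ℝ => -ρ * x) (-ρ) s := by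
      simpa using (hasDerivAt_id s).const_mul (-ρ)
    have t2 : HasDerivAt (fun x : ℝ => K / lam * (1 - Real.exp (-lam * x)))
        (K / lam * (0 - -lam * Real.exp (-lam * s))) s :=
      ((hasDerivAt_const s (1:ℝ)).sub h1).const_mul (K / lam)
    have t3 : HasDerivAt (fun x : ℝ => K / lam * (Real.exp (-lam * (T - x)) - Real.exp (-lam * T)))
        (K / lam * (lam * Real.exp (-lam * (T - s)))) s := by
      simpa using (h2.sub_const (Real.exp (-lam * T))).const_mul (K / lam)
    have := (t1.add t2).add t3
    rw [hAdef, hψdef]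
    refine this.congr_deriv ?_
    field_simp [hlam.ne']
    ring
  have hA0 : A 0 = 0 := by simp [hAdef]
  have hψcont : Continuous ψ := by
    rw [hψdef]
    exact ((continuous_const.mul continuous_id).rexp).add
      ((continuous_const.mul (continuous_const.sub continuous_id)).rexp)
  have hAcont : Continuous A :=
    continuous_iff_continuousAt.mpr fun s => (hAderiv s).continuousAt
  have hInt : Continuous (fun r => K * ψ r * Real.exp (-(A r))) :=
    (continuous_const.mul hψcont).mul hAcont.neg.rexp
  set B : ℝ → ℝ := fun s => ∫ r in (0:ℝ)..s, K * ψ r * Real.exp (-(A r)) with hBdef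
  have hBderiv : ∀ s : ℝ, HasDerivAt B (K * ψ s * Real.exp (-(A s))) s := fun s =>
    intervalIntegral.integral_hasDerivAt_right (hInt.intervalIntegrable 0 s)
      (hInt.stronglyMeasurableAtFilter _ _) hInt.continuousAt
  have hBcont : Continuous B := by
    rw [continuous_iff_continuousAt]; exact fun s => (hBderiv s).continuousAt
  have hfcont : ContinuousOn f (Set.Icc 0 T) := fun s hs =>
    (hderiv s hs).differentiableWithinAt.continuousWithinAt
  set g : ℝ → ℝ := fun s => f s * Real.exp (-(A s)) - B s with hgdef
  clear_value ψ A B g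
  -- g is antitone on [0, T]
  have hganti : AntitoneOn g (Set.Icc 0 T) := by
    apply antitoneOn_of_deriv_nonpos (convex_Icc 0 T)
    · rw [hgdef]
      exact (hfcont.mul (hAcont.neg.rexp.continuousOn)).sub hBcont.continuousOn
    · intro x hx
      rw [interior_Icc] at hx
      have hfx : HasDerivAt f (f' x) x :=
        (hderiv x (Ioo_subset_Icc_self hx)).hasDerivAt (Icc_mem_nhds hx.1 hx.2)
      rw [hgdef]
      exact ((hfx.mul ((hAderiv x).neg.exp)).sub
        (hBderiv x)).differentiableAt.differentiableWithinAt
    · intro x hx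
      rw [interior_Icc] at hx
      have hfx : HasDerivAt f (f' x) x :=
        (hderiv x (Ioo_subset_Icc_self hx)).hasDerivAt (Icc_mem_nhds hx.1 hx.2)
      have hgx : HasDerivAt g
          (f' x * Real.exp (-(A x)) + f x * (Real.exp (-(A x)) * -(-ρ + K * ψ x))
            - K * ψ x * Real.exp (-(A x))) x := by
        rw [hgdef]; exact (hfx.mul ((hAderiv x).neg.exp)).sub (hBderiv x)
      rw [hgx.deriv]
      have hi := hineq x (Ioo_subset_Icc_self hx)
      have hψx : ψ x = Real.exp (-lam * x) + Real.exp (-lam * (T - x)) := by rw [hψdef]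
      rw [hψx]
      nlinarith [Real.exp_pos (-(A x)), hi,
        mul_le_mul_of_nonneg_right hi (Real.exp_pos (-(A x))).le]
  -- key difference bound on A
  have hAbound : ∀ s t : ℝ, 0 ≤ s → t ≤ T → A t - A s ≤ 2 * K / lam - ρ * (t - s) := by
    intro s t hs ht
    have e1 : Real.exp (-lam * s) ≤ 1 := Real.exp_le_one_iff.mpr (by nlinarith)
    have e2 : 0 < Real.exp (-lam * t) := Real.exp_pos _
    have e3 : Real.exp (-lam * (T - t)) ≤ 1 := Real.exp_le_one_iff.mpr (by nlinarith)
    have e4 : 0 < Real.exp (-lam * (T - s)) := Real.exp_pos _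
    have hKl : 0 < K / lam := div_pos hK hlam
    rw [hAdef]
    simp only
    rw [show 2 * K / lam = 2 * (K / lam) by ring]
    nlinarith [mul_le_mul_of_nonneg_left e1 hKl.le, mul_le_mul_of_nonneg_left e3 hKl.le,
      mul_pos hKl e2, mul_pos hKl e4]
  intro t ht
  obtain ⟨ht0, htT⟩ := ht
  -- from antitonicity: f t ≤ (f 0 + B t) * exp (A t)
  have hg0 : g 0 = f 0 := by
    rw [hgdef]; simp [hA0, hBdef]
  have hgt : g t ≤ f 0 := by
    rw [← hg0]
    exact hganti ⟨le_refl 0, hT.le⟩ ⟨ht0, htT⟩ ht0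
  have hkey : f t ≤ f 0 * Real.exp (A t) + Real.exp (A t) * B t := by
    have h1 : f t * Real.exp (-(A t)) ≤ f 0 + B t := by
      have : g t = f t * Real.exp (-(A t)) - B t := by rw [hgdef]
      linarith [hgt, this ▸ hgt]
    have h2 := mul_le_mul_of_nonneg_right h1 (Real.exp_pos (A t)).le
    calc f t = f t * Real.exp (-(A t)) * Real.exp (A t) := by
          rw [mul_assoc, ← Real.exp_add]; simp
      _ ≤ (f 0 + B t) * Real.exp (A t) := h2
      _ = f 0 * Real.exp (A t) + Real.exp (A t) * B t := by ring
  -- rewrite exp(A t) * B t as an integral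
  have hEB : Real.exp (A t) * B t = ∫ s in (0:ℝ)..t, K * ψ s * Real.exp (A t - A s) := by
    rw [hBdef]
    simp only
    rw [← intervalIntegral.integral_const_mul]
    apply intervalIntegral.integral_congr
    intro s _
    show Real.exp (A t) * (K * ψ s * Real.exp (-(A s))) = K * ψ s * Real.exp (A t - A s)
    rw [sub_eq_add_neg, Real.exp_add]
    ring
  have hmono : (∫ s in (0:ℝ)..t, K * ψ s * Real.exp (A t - A s))
      ≤ ∫ s in (0:ℝ)..t, K * ψ s * Real.exp (2 * K / lam - ρ * (t - s)) := by
    apply intervalIntegral.integral_mono_on ht0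
    · exact ((continuous_const.mul hψcont).mul
        (Real.continuous_exp.comp (continuous_const.sub hAcont))).intervalIntegrable 0 t
    · exact ((continuous_const.mul hψcont).mul
        (Real.continuous_exp.comp ((continuous_const.sub (continuous_const.mul
          (continuous_const.sub continuous_id)))))).intervalIntegrable 0 t
    · intro s hs
      have hb := hAbound s t hs.1 htT
      have hψpos : 0 ≤ K * ψ s := by
        rw [hψdef]; positivity
      exact mul_le_mul_of_nonneg_left (Real.exp_le_exp.mpr hb) hψpos
  -- compute the explicit integral
  have hc1 : ρ - lam ≠ 0 := by linarith
  have hc2 : ρ + lam ≠ 0 := by positivity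
  have hcalc : (∫ s in (0:ℝ)..t, K * ψ s * Real.exp (2 * K / lam - ρ * (t - s)))
      = K * Real.exp (2 * K / lam) * Real.exp (-ρ * t) *
        ((Real.exp ((ρ - lam) * t) - 1) / (ρ - lam)
          + Real.exp (-lam * T) * ((Real.exp ((ρ + lam) * t) - 1) / (ρ + lam))) := by
    have hfun : ∀ s : ℝ, K * ψ s * Real.exp (2 * K / lam - ρ * (t - s))
        = K * Real.exp (2 * K / lam) * Real.exp (-ρ * t) *
          (Real.exp ((ρ - lam) * s) + Real.exp (-lam * T) * Real.exp ((ρ + lam) * s)) := by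
      intro s
      rw [hψdef]
      simp only
      rw [show -lam * (T - s) = -lam * T + lam * s by ring,
          show 2 * K / lam - ρ * (t - s) = 2 * K / lam + -ρ * t + ρ * s by ring,
          show (ρ - lam) * s = ρ * s + -lam * s by ring,
          show (ρ + lam) * s = ρ * s + lam * s by ring,
          Real.exp_add, Real.exp_add, Real.exp_add, Real.exp_add, Real.exp_add]
      ring
    rw [intervalIntegral.integral_congr (g := fun s =>
      K * Real.exp (2 * K / lam) * Real.exp (-ρ * t) *
        (Real.exp ((ρ - lam) * s) + Real.exp (-lam * T) * Real.exp ((ρ + lam) * s)))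
      (fun s _ => hfun s)]
    rw [intervalIntegral.integral_const_mul]
    congr 1
    have i1 : IntervalIntegrable (fun s : ℝ => Real.exp ((ρ - lam) * s))
        MeasureTheory.volume 0 t := by
      apply Continuous.intervalIntegrable; fun_prop
    have i2 : IntervalIntegrable (fun s : ℝ => Real.exp (-lam * T) * Real.exp ((ρ + lam) * s))
        MeasureTheory.volume 0 t := by
      apply Continuous.intervalIntegrable; fun_prop
    rw [intervalIntegral.integral_add i1 i2,
      intervalIntegral.integral_const_mul, integral_exp_mul' _ _ hc1, integral_exp_mul' _ _ hc2]
  -- final estimates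
  have hf0 : 0 ≤ f 0 := hnonneg 0 ⟨le_refl 0, hT.le⟩
  have hAt : Real.exp (A t) ≤ Real.exp (2 * K / lam) * Real.exp (-ρ * t) := by
    rw [← Real.exp_add]
    apply Real.exp_le_exp.mpr
    have := hAbound 0 t le_rfl htT
    rw [hA0] at this
    linarith
  have e1pos : 0 < Real.exp ((ρ - lam) * t) := Real.exp_pos _
  have e2ge : 1 ≤ Real.exp ((ρ + lam) * t) := Real.one_le_exp (by positivity)
  have hEpos : 0 < Real.exp (2 * K / lam) := Real.exp_pos _
  have hρtpos : 0 < Real.exp (-ρ * t) := Real.exp_pos _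
  have hTpos : 0 < Real.exp (-lam * T) := Real.exp_pos _
  -- piece 1
  have p1 : f 0 * Real.exp (A t) ≤ Real.exp (2 * K / lam) * (f 0 * Real.exp (-ρ * t)) := by
    have := mul_le_mul_of_nonneg_left hAt hf0
    linarith [this]
  -- piece 2
  have p2 : K * Real.exp (2 * K / lam) * Real.exp (-ρ * t) *
        ((Real.exp ((ρ - lam) * t) - 1) / (ρ - lam)) ≤
      Real.exp (2 * K / lam) * (K * (Real.exp (-ρ * t) / (lam - ρ))) := by
    have hrw : (Real.exp ((ρ - lam) * t) - 1) / (ρ - lam)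
        = (1 - Real.exp ((ρ - lam) * t)) / (lam - ρ) := by
      rw [div_eq_div_iff hc1 (by linarith : lam - ρ ≠ 0)]; ring
    rw [hrw]
    have h1 : (1 - Real.exp ((ρ - lam) * t)) / (lam - ρ) ≤ 1 / (lam - ρ) := by
      exact (div_le_div_iff_of_pos_right (by linarith)).mpr (by linarith [Real.exp_pos ((ρ - lam) * t)])
    calc K * Real.exp (2 * K / lam) * Real.exp (-ρ * t) *
          ((1 - Real.exp ((ρ - lam) * t)) / (lam - ρ))
        ≤ K * Real.exp (2 * K / lam) * Real.exp (-ρ * t) * (1 / (lam - ρ)) := by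
          apply mul_le_mul_of_nonneg_left h1 (by positivity)
      _ = Real.exp (2 * K / lam) * (K * (Real.exp (-ρ * t) / (lam - ρ))) := by ring
  -- piece 3
  have hcomb : Real.exp (-ρ * t) * (Real.exp (-lam * T) * Real.exp ((ρ + lam) * t))
      = Real.exp (-lam * (T - t)) := by
    rw [← Real.exp_add, ← Real.exp_add]; ring_nf
  have p3 : K * Real.exp (2 * K / lam) * Real.exp (-ρ * t) *
        (Real.exp (-lam * T) * ((Real.exp ((ρ + lam) * t) - 1) / (ρ + lam))) ≤
      Real.exp (2 * K / lam) * (K * (Real.exp (-lam * (T - t)) / (lam + ρ))) := by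
    have h1 : (Real.exp ((ρ + lam) * t) - 1) / (ρ + lam)
        ≤ Real.exp ((ρ + lam) * t) / (ρ + lam) := by
      exact (div_le_div_iff_of_pos_right (by linarith)).mpr (by linarith)
    calc K * Real.exp (2 * K / lam) * Real.exp (-ρ * t) *
          (Real.exp (-lam * T) * ((Real.exp ((ρ + lam) * t) - 1) / (ρ + lam)))
        ≤ K * Real.exp (2 * K / lam) * Real.exp (-ρ * t) *
          (Real.exp (-lam * T) * (Real.exp ((ρ + lam) * t) / (ρ + lam))) := by
          apply mul_le_mul_of_nonneg_left (mul_le_mul_of_nonneg_left h1 hTpos.le) (by positivity)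
      _ = Real.exp (2 * K / lam) * (K * ((Real.exp (-ρ * t) *
            (Real.exp (-lam * T) * Real.exp ((ρ + lam) * t))) / (ρ + lam))) := by ring
      _ = Real.exp (2 * K / lam) * (K * (Real.exp (-lam * (T - t)) / (lam + ρ))) := by
          rw [hcomb, add_comm ρ lam]
  calc f t ≤ f 0 * Real.exp (A t) + Real.exp (A t) * B t := hkey
    _ ≤ f 0 * Real.exp (A t) + (K * Real.exp (2 * K / lam) * Real.exp (-ρ * t) *
        ((Real.exp ((ρ - lam) * t) - 1) / (ρ - lam)
          + Real.exp (-lam * T) * ((Real.exp ((ρ + lam) * t) - 1) / (ρ + lam)))) := by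
        rw [hEB]; linarith [hmono, hcalc ▸ hmono]
    _ ≤ Real.exp (2 * K / lam) * (f 0 * Real.exp (-ρ * t))
        + (Real.exp (2 * K / lam) * (K * (Real.exp (-ρ * t) / (lam - ρ)))
          + Real.exp (2 * K / lam) * (K * (Real.exp (-lam * (T - t)) / (lam + ρ)))) := by
        have := p2; have := p3
        nlinarith [p1, p2, p3]
    _ = Real.exp (2 * K / lam) * (f 0 * Real.exp (-ρ * t)
        + K * (Real.exp (-ρ * t) / (lam - ρ) + Real.exp (-lam * (T - t)) / (lam + ρ))) := by ring
end

section
/- Let n be a positive integer and A ∈ ℝ^{n×n}. The following are equivalent: (i) for every x ∈ ℝⁿ, ∫₀^∞ ‖exp(tA) x‖² dt < ∞; (ii) there exist constants K, λ > 0 such that ‖exp(tA) x‖² ≤ K e^{−λt} ‖x‖² for all t ≥ 0 and all x ∈ ℝⁿ. -/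
open Matrix MeasureTheory

/-- The Euclidean norm of a vector in `ℝⁿ`. -/
noncomputable def euclNorm {n : ℕ} (x : Fin n → ℝ) : ℝ :=
  Real.sqrt (∑ i, (x i) ^ 2)

namespace L2StabAux

lemma euclNorm_sq {n : ℕ} (x : Fin n → ℝ) : (euclNorm x) ^ 2 = ∑ i, (x i) ^ 2 :=
  Real.sq_sqrt (Finset.sum_nonneg fun _ _ => sq_nonneg _)

variable {n : ℕ} (A : Matrix (Fin n) (Fin n) ℝ)

/-- squared-norm of the solution at time `t` -/
noncomputable def Fq (x : Fin n → ℝ) (t : ℝ) : ℝ :=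
  ∑ i, ((NormedSpace.exp (t • A) *ᵥ x) i) ^ 2

lemma Fq_def (x : Fin n → ℝ) (t : ℝ) :
    Fq A x t = ∑ i, ((NormedSpace.exp (t • A) *ᵥ x) i) ^ 2 := rfl

lemma Fq_nonneg (x : Fin n → ℝ) (t : ℝ) : 0 ≤ Fq A x t :=
  Finset.sum_nonneg fun _ _ => sq_nonneg _

lemma exp_smul_add (s t : ℝ) :
    NormedSpace.exp ((s + t) • A)
      = NormedSpace.exp (s • A) * NormedSpace.exp (t • A) := by
  rw [add_smul]
  exact Matrix.exp_add_of_commute _ _ (((Commute.refl A).smul_left s).smul_right t)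

lemma exp_neg_mul_exp (t : ℝ) :
    NormedSpace.exp ((-t) • A) * NormedSpace.exp (t • A) = 1 := by
  rw [← exp_smul_add, neg_add_cancel, zero_smul, NormedSpace.exp_zero]

lemma exp_smul_continuous : Continuous fun t : ℝ => NormedSpace.exp (t • A) := by
  letI : SeminormedRing (Matrix (Fin n) (Fin n) ℝ) := Matrix.linftyOpSemiNormedRing
  letI : NormedRing (Matrix (Fin n) (Fin n) ℝ) := Matrix.linftyOpNormedRing
  letI : NormedAlgebra ℝ (Matrix (Fin n) (Fin n) ℝ) := Matrix.linftyOpNormedAlgebra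
  exact continuous_iff_continuousAt.mpr fun t =>
    ContinuousAt.comp (g := NormedSpace.exp) (f := fun t : ℝ => t • A)
      (NormedSpace.exp_analytic (𝕂 := ℝ) (t • A)).continuousAt
      (continuous_id.smul continuous_const).continuousAt

lemma Fq_continuous (x : Fin n → ℝ) : Continuous (Fq A x) := by
  have h1 : Continuous fun t : ℝ => NormedSpace.exp (t • A) *ᵥ x :=
    (exp_smul_continuous A).matrix_mulVec continuous_const
  exact continuous_finset_sum _ fun i _ => ((continuous_apply i).comp h1).pow 2

lemma frob_bound (M : Matrix (Fin n) (Fin n) ℝ) (x : Fin n → ℝ) :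
    ∑ i, ((M *ᵥ x) i) ^ 2 ≤ (∑ i, ∑ j, (M i j) ^ 2) * ∑ j, (x j) ^ 2 := by
  rw [Finset.sum_mul]
  refine Finset.sum_le_sum fun i _ => ?_
  simpa [Matrix.mulVec, dotProduct] using
    Finset.sum_mul_sq_le_sq_mul_sq Finset.univ (fun j => M i j) x

lemma Fq_shift (x : Fin n → ℝ) (s t : ℝ) :
    Fq A x (s + t) = Fq A (NormedSpace.exp (t • A) *ᵥ x) s := by
  unfold Fq
  rw [exp_smul_add, ← Matrix.mulVec_mulVec]

set_option maxHeartbeats 2000000 in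
lemma forward (hn : 0 < n) (hyp : ∀ x : Fin n → ℝ, IntegrableOn (Fq A x) (Set.Ici 0)) :
    ∃ K lam : ℝ, 0 < K ∧ 0 < lam ∧ ∀ t : ℝ, 0 ≤ t → ∀ x : Fin n → ℝ,
      Fq A x t ≤ K * Real.exp (-lam * t) * ∑ j, (x j) ^ 2 := by
  classical
  set g : ℝ → ℝ := fun t => ∑ j, Fq A (Pi.single j 1) t with hg_def
  have hg_eq : ∀ t, g t = ∑ i, ∑ j, (NormedSpace.exp (t • A) i j) ^ 2 := by
    intro t
    rw [hg_def, Finset.sum_comm]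
    refine Finset.sum_congr rfl fun j _ => ?_
    rw [Fq_def]
    simp [Matrix.mulVec_single]
  have hg_int : IntegrableOn g (Set.Ici 0) :=
    integrable_finset_sum _ fun j _ => hyp _
  have hg_nonneg : ∀ t, 0 ≤ g t := fun t =>
    Finset.sum_nonneg fun j _ => Fq_nonneg A _ t
  set C : ℝ := (∫ t in Set.Ici (0:ℝ), g t) + 1 with hC_def
  have hC0 : 0 ≤ ∫ t in Set.Ici (0:ℝ), g t :=
    setIntegral_nonneg measurableSet_Ici fun t _ => hg_nonneg t
  have hCpos : 0 < C := by positivity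
  -- uniform bound on the tail quadratic form
  have hQle : ∀ y : Fin n → ℝ,
      (∫ s in Set.Ici (0:ℝ), Fq A y s) ≤ C * ∑ j, (y j) ^ 2 := by
    intro y
    have h1 : (∫ s in Set.Ici (0:ℝ), Fq A y s)
        ≤ ∫ s in Set.Ici (0:ℝ), g s * ∑ j, (y j) ^ 2 := by
      refine setIntegral_mono_on (hyp y) (hg_int.mul_const _) measurableSet_Ici
        fun s _ => ?_
      rw [hg_eq, Fq_def]
      exact frob_bound _ y
    rw [integral_mul_const] at h1
    have h2 : 0 ≤ ∑ j, (y j) ^ 2 := Finset.sum_nonneg fun _ _ => sq_nonneg _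
    nlinarith
  -- uniform lower bound constant
  have hmc : Continuous fun s : ℝ => ∑ i, ∑ j, (NormedSpace.exp ((-s) • A) i j) ^ 2 := by
    have h1 : Continuous fun s : ℝ => NormedSpace.exp ((-s) • A) :=
      (exp_smul_continuous A).comp continuous_neg
    exact continuous_finset_sum _ fun i _ =>
      continuous_finset_sum _ fun j _ => (h1.matrix_elem i j).pow 2
  obtain ⟨s₀, hs₀, hmax⟩ := (isCompact_Icc (a := (0:ℝ)) (b := 1)).exists_isMaxOn
    (Set.nonempty_Icc.mpr zero_le_one) hmc.continuousOn
  set M : ℝ := ∑ i, ∑ j, (NormedSpace.exp ((-s₀) • A) i j) ^ 2 with hM_def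
  have hmax' : ∀ s ∈ Set.Icc (0:ℝ) 1,
      (∑ i, ∑ j, (NormedSpace.exp ((-s) • A) i j) ^ 2) ≤ M :=
    fun s hs => isMaxOn_iff.mp hmax s hs
  have hMpos : 0 < M := by
    have h0 := hmax' 0 (Set.mem_Icc.mpr ⟨le_rfl, zero_le_one⟩)
    have hv : (∑ i, ∑ j, (NormedSpace.exp ((-(0:ℝ)) • A) i j) ^ 2) = (n : ℝ) := by
      simp [Matrix.one_apply, apply_ite (· ^ 2)]
    rw [hv] at h0
    have : (0:ℝ) < n := Nat.cast_pos.mpr hn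
    linarith
  have hlow : ∀ s ∈ Set.Icc (0:ℝ) 1, ∀ z : Fin n → ℝ,
      (∑ j, (z j) ^ 2) ≤ M * Fq A z s := by
    intro s hs z
    have h1 : NormedSpace.exp ((-s) • A) *ᵥ (NormedSpace.exp (s • A) *ᵥ z) = z := by
      rw [Matrix.mulVec_mulVec, exp_neg_mul_exp, Matrix.one_mulVec]
    calc (∑ j, (z j) ^ 2)
        = ∑ i, ((NormedSpace.exp ((-s) • A) *ᵥ (NormedSpace.exp (s • A) *ᵥ z)) i) ^ 2 := by
          rw [h1]
      _ ≤ (∑ i, ∑ j, (NormedSpace.exp ((-s) • A) i j) ^ 2)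
            * ∑ j, ((NormedSpace.exp (s • A) *ᵥ z) j) ^ 2 := frob_bound _ _
      _ ≤ M * Fq A z s :=
          mul_le_mul_of_nonneg_right (hmax' s hs) (Fq_nonneg A z s)
  refine ⟨M * C, 1 / C, mul_pos hMpos hCpos, one_div_pos.mpr hCpos, ?_⟩
  intro t ht x
  set f : ℝ → ℝ := Fq A x with hf_def
  have hfc : Continuous f := Fq_continuous A x
  have hfint : IntegrableOn f (Set.Ici 0) := hyp x
  set I : ℝ := ∫ s in Set.Ici (0:ℝ), f s with hI_def
  set V : ℝ → ℝ := fun u => I - ∫ s in (0:ℝ)..u, f s with hV_def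
  have hVderiv : ∀ u : ℝ, HasDerivAt V (-(f u)) u := by
    intro u
    have h1 : HasDerivAt (fun v => ∫ s in (0:ℝ)..v, f s) (f u) u :=
      intervalIntegral.integral_hasDerivAt_right (hfc.intervalIntegrable 0 u)
        hfc.stronglyMeasurable.stronglyMeasurableAtFilter hfc.continuousAt
    simpa [hV_def] using h1.const_sub I
  have hVcont : Continuous V :=
    continuous_iff_continuousAt.mpr fun u => (hVderiv u).differentiableAt.continuousAt
  have hVeq : ∀ u : ℝ, 0 ≤ u → V u = ∫ s in Set.Ici u, f s := by
    intro u hu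
    have hd : Disjoint (Set.Ico 0 u) (Set.Ici u) :=
      Set.disjoint_left.mpr fun s hs hs' => hs.2.not_ge hs'
    have hsplit : I = (∫ s in Set.Ico 0 u, f s) + ∫ s in Set.Ici u, f s := by
      rw [hI_def, ← setIntegral_union hd measurableSet_Ici
        (hfint.mono_set Set.Ico_subset_Ici_self)
        (hfint.mono_set (Set.Ici_subset_Ici.mpr hu)), Set.Ico_union_Ici_eq_Ici hu]
    have h2 : (∫ s in (0:ℝ)..u, f s) = ∫ s in Set.Ico 0 u, f s := by
      rw [intervalIntegral.integral_of_le hu, integral_Ioc_eq_integral_Ioo,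
        integral_Ico_eq_integral_Ioo]
    rw [hV_def]
    simp only []
    rw [h2, hsplit]
    ring
  have hVub : ∀ u : ℝ, 0 ≤ u → V u ≤ C * f u := by
    intro u hu
    have hpre : (fun s : ℝ => s + u) ⁻¹' Set.Ici u = Set.Ici 0 := by
      ext s; simp [le_add_iff_nonneg_left]
    have hshift : (∫ s in Set.Ici u, f s) = ∫ s in Set.Ici (0:ℝ), f (s + u) := by
      rw [← (measurePreserving_add_right volume u).setIntegral_preimage_emb
        (Homeomorph.addRight u).measurableEmbedding f (Set.Ici u), hpre]
    rw [hVeq u hu, hshift]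
    calc (∫ s in Set.Ici (0:ℝ), f (s + u))
        = ∫ s in Set.Ici (0:ℝ), Fq A (NormedSpace.exp (u • A) *ᵥ x) s := by
          simp only [hf_def, Fq_shift A x]
      _ ≤ C * ∑ j, ((NormedSpace.exp (u • A) *ᵥ x) j) ^ 2 := hQle _
      _ = C * f u := rfl
  have hVlb : ∀ u : ℝ, 0 ≤ u → f u ≤ M * V u := by
    intro u hu
    have h1 : f u = ∫ _ in (0:ℝ)..1, f u := by simp
    have hc2 : Continuous fun s : ℝ => M * f (s + u) :=
      (continuous_const.mul (hfc.comp (continuous_id.add continuous_const)))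
    have h2 : (∫ _ in (0:ℝ)..1, f u) ≤ ∫ s in (0:ℝ)..1, M * f (s + u) := by
      refine intervalIntegral.integral_mono_on zero_le_one intervalIntegrable_const
        (hc2.intervalIntegrable 0 1) fun s hs => ?_
      have h3 := hlow s hs (NormedSpace.exp (u • A) *ᵥ x)
      rw [hf_def, Fq_shift A x s u]
      exact h3
    have h3 : (∫ s in (0:ℝ)..1, M * f (s + u)) = M * ∫ s in u..(u+1), f s := by
      rw [intervalIntegral.integral_const_mul, intervalIntegral.integral_comp_add_right f u,
        zero_add, add_comm 1 u]
    have h4 : (∫ s in u..(u+1), f s) ≤ V u := by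
      rw [intervalIntegral.integral_of_le (by linarith : u ≤ u + 1), hVeq u hu]
      refine setIntegral_mono_set (hfint.mono_set (Set.Ici_subset_Ici.mpr hu))
        (Filter.Eventually.of_forall fun s => Fq_nonneg A x s)
        (Filter.Eventually.of_forall fun s hs => le_of_lt hs.1)
    calc f u = ∫ _ in (0:ℝ)..1, f u := h1
      _ ≤ ∫ s in (0:ℝ)..1, M * f (s + u) := h2
      _ = M * ∫ s in u..(u+1), f s := h3
      _ ≤ M * V u := mul_le_mul_of_nonneg_left h4 hMpos.le
  -- Gronwall
  set G : ℝ → ℝ := fun u => V u * Real.exp (u / C) with hG_def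
  have hGd : ∀ u : ℝ, HasDerivAt G
      (-(f u) * Real.exp (u / C) + V u * (Real.exp (u / C) * (1 / C))) u := by
    intro u
    have h1 : HasDerivAt (fun v : ℝ => v / C) (1 / C) u := by
      simpa using (hasDerivAt_id u).div_const C
    have he : HasDerivAt (fun v : ℝ => Real.exp (v / C)) (Real.exp (u / C) * (1 / C)) u :=
      h1.exp
    exact (hVderiv u).mul he
  have hGanti : AntitoneOn G (Set.Ici 0) := by
    refine antitoneOn_of_deriv_nonpos (convex_Ici 0)
      ((hVcont.mul (Real.continuous_exp.comp (continuous_id.div_const C))).continuousOn)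
      (fun u _ => (hGd u).differentiableAt.differentiableWithinAt) ?_
    intro u hu
    rw [interior_Ici] at hu
    rw [(hGd u).deriv]
    have h1 := hVub u hu.le
    have h2 := Real.exp_pos (u / C)
    have h4 : V u * Real.exp (u / C) ≤ C * f u * Real.exp (u / C) :=
      mul_le_mul_of_nonneg_right h1 h2.le
    have h5 : V u * Real.exp (u / C) * C⁻¹ ≤ C * f u * Real.exp (u / C) * C⁻¹ :=
      mul_le_mul_of_nonneg_right h4 (inv_nonneg.mpr hCpos.le)
    have h6 : C * f u * Real.exp (u / C) * C⁻¹ = f u * Real.exp (u / C) := by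
      field_simp
    have h7 : V u * (Real.exp (u / C) * (1 / C)) = V u * Real.exp (u / C) * C⁻¹ := by
      ring
    rw [h7]
    linarith
  have hG0 : G 0 = V 0 := by simp [hG_def]
  have hV0 : V 0 = I := by simp [hV_def]
  have hGt : G t ≤ C * ∑ j, (x j) ^ 2 := by
    calc G t ≤ G 0 := hGanti Set.self_mem_Ici ht ht
      _ = I := by rw [hG0, hV0]
      _ ≤ C * ∑ j, (x j) ^ 2 := hQle x
  have hVt : V t ≤ (C * ∑ j, (x j) ^ 2) * Real.exp (-(t / C)) := by
    have h2 := Real.exp_pos (t / C)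
    have h5 : V t * Real.exp (t / C) ≤ C * ∑ j, (x j) ^ 2 := hGt
    rw [Real.exp_neg]
    have h7 : V t * Real.exp (t / C) * (Real.exp (t / C))⁻¹
        ≤ (C * ∑ j, (x j) ^ 2) * (Real.exp (t / C))⁻¹ :=
      mul_le_mul_of_nonneg_right h5 (inv_nonneg.mpr h2.le)
    have h8 : V t * Real.exp (t / C) * (Real.exp (t / C))⁻¹ = V t := by
      field_simp
    linarith
  calc Fq A x t = f t := rfl
    _ ≤ M * V t := hVlb t ht
    _ ≤ M * ((C * ∑ j, (x j) ^ 2) * Real.exp (-(t / C))) :=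
        mul_le_mul_of_nonneg_left hVt hMpos.le
    _ = M * C * Real.exp (-(1 / C) * t) * ∑ j, (x j) ^ 2 := by
        rw [show -(1 / C) * t = -(t / C) by ring]; ring

end L2StabAux

open L2StabAux

/-- Deterministic case of Corollary 3.3: square-integrability on `[0,∞)` of every
solution `t ↦ exp(tA)x` of `x′ = Ax` is equivalent to exponential stability:
`‖exp(tA)x‖² ≤ K e^{-λt} ‖x‖²`. -/
theorem L2_stable_iff_exp_stable
    (n : ℕ) (hn : 0 < n) (A : Matrix (Fin n) (Fin n) ℝ) :
    (∀ x : Fin n → ℝ,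
        MeasureTheory.IntegrableOn
          (fun t : ℝ => (euclNorm (NormedSpace.exp (t • A) *ᵥ x)) ^ 2)
          (Set.Ici 0))
      ↔ ∃ K lam : ℝ, 0 < K ∧ 0 < lam ∧
          ∀ (t : ℝ), 0 ≤ t → ∀ x : Fin n → ℝ,
            (euclNorm (NormedSpace.exp (t • A) *ᵥ x)) ^ 2
              ≤ K * Real.exp (-lam * t) * (euclNorm x) ^ 2 := by
  simp only [euclNorm_sq]
  constructor
  · intro hyp
    have hyp' : ∀ x : Fin n → ℝ, IntegrableOn (Fq A x) (Set.Ici 0) := fun x => hyp x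
    obtain ⟨K, lam, hK, hlam, hb⟩ := forward A hn hyp'
    exact ⟨K, lam, hK, hlam, fun t ht x => hb t ht x⟩
  · intro ⟨K, lam, hK, hlam, hb⟩ x
    have hint : IntegrableOn (fun t => K * Real.exp (-lam * t) * (∑ j, (x j) ^ 2))
        (Set.Ici 0) := by
      have h2 : IntegrableOn (fun t => K * Real.exp (-lam * t) * (∑ j, (x j) ^ 2))
          (Set.Ioi 0) := (((exp_neg_integrableOn_Ioi 0 hlam).const_mul K).mul_const _)
      exact Iff.mpr integrableOn_Ici_iff_integrableOn_Ioi h2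
    refine Integrable.mono' hint ?_ ?_
    · exact (Fq_continuous A x).aestronglyMeasurable.restrict
    · filter_upwards [ae_restrict_mem measurableSet_Ici] with t ht
      show ‖Fq A x t‖ ≤ _
      rw [Real.norm_of_nonneg (Fq_nonneg A x t)]
      exact hb t ht x
end
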